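/- arXiv:0907.0292 — 5 statements merged into one kernel-verified Lean document; each statement's English description precedes it below -/
import Mathlib

section
/- Let T > 0 and x ∈ ℝ. Then the series identity ∑_{n=0}^∞ (x^{2n}/(n+1)!) ∫_{[0,T]^{n+1}} ( ∑_{i=1}^{n+1} e^{−x² t_i/2} ∏_{j≠i} 𝟙_{[0,t_i]}(t_j) )² dt_1 ⋯ dt_{n+1} = T holds. (This is the chaos-expansion computation showing that the Fourier transform ξ̂(x) of the Brownian stochastic current ξ(x) = ∫_0^T δ(x−B_s) dB_s satisfies E|ξ̂(x)|² = T for every x ∈ ℝ.) -/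
open MeasureTheory Real
open scoped ENNReal


lemma bcf_pi_restrict (T : ℝ) (m : ℕ) :
    Measure.pi (fun _ : Fin m => (volume : Measure ℝ).restrict (Set.Icc (0:ℝ) T))
      = (volume : Measure (Fin m → ℝ)).restrict (Set.univ.pi fun _ => Set.Icc (0:ℝ) T) := by
  refine Measure.pi_eq (μ := fun _ : Fin m => (volume : Measure ℝ).restrict (Set.Icc (0:ℝ) T))
    fun s hs => ?_
  rw [Measure.restrict_apply (MeasurableSet.univ_pi hs), ← Set.pi_inter_distrib, volume_pi,
    Measure.pi_pi]
  exact Finset.prod_congr rfl fun i _ => (Measure.restrict_apply (hs i)).symm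

lemma bcf_diag_null (m : ℕ) (i j : Fin m) (hij : i ≠ j) :
    (volume : Measure (Fin m → ℝ)) {t | t i = t j} = 0 := by
  have hset : {t : Fin m → ℝ | t i = t j} =
      (LinearMap.ker ((LinearMap.proj i : (Fin m → ℝ) →ₗ[ℝ] ℝ) - LinearMap.proj j) :
        Submodule ℝ (Fin m → ℝ)) := by
    ext t
    simp [LinearMap.mem_ker, LinearMap.sub_apply, sub_eq_zero, Set.mem_setOf_eq]
  rw [hset]
  refine Measure.addHaar_submodule _ _ ?_
  intro h
  have hx : Pi.single (M := fun _ : Fin m => ℝ) i 1 ∈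
      LinearMap.ker ((LinearMap.proj i : (Fin m → ℝ) →ₗ[ℝ] ℝ) - LinearMap.proj j) :=
    h ▸ Submodule.mem_top
  simp [LinearMap.mem_ker, LinearMap.sub_apply, Pi.single_eq_same,
    Pi.single_eq_of_ne hij.symm, sub_eq_zero] at hx

lemma bcf_ind_sq (s : Set ℝ) (y : ℝ) :
    Set.indicator s (1 : ℝ → ℝ) y * Set.indicator s 1 y = Set.indicator s 1 y := by
  by_cases h : y ∈ s <;> simp [h]

lemma bcf_meas_ind (n : ℕ) (i j : Fin n) :
    Measurable fun t : Fin n → ℝ => Set.indicator (Set.Icc (0:ℝ) (t i)) (1 : ℝ → ℝ) (t j) := by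
  have heq : (fun t : Fin n → ℝ => Set.indicator (Set.Icc (0:ℝ) (t i)) (1 : ℝ → ℝ) (t j))
      = fun t => if t ∈ ({t : Fin n → ℝ | 0 ≤ t j} ∩ {t | t j ≤ t i}) then (1:ℝ) else 0 := by
    funext t
    rw [Set.indicator_apply]
    simp [Set.mem_Icc, Set.mem_inter_iff, Set.mem_setOf_eq]
  rw [heq]
  exact Measurable.ite
    ((measurableSet_le measurable_const (measurable_pi_apply j)).inter
      (measurableSet_le (measurable_pi_apply j) (measurable_pi_apply i)))
    measurable_const measurable_const

lemma bcf_meas_q (x : ℝ) (n : ℕ) (i : Fin (n+1)) :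
    Measurable fun t : Fin (n+1) → ℝ => Real.exp (-(x^2 * t i)) *
      ∏ j ∈ Finset.univ.erase i, Set.indicator (Set.Icc (0:ℝ) (t i)) 1 (t j) :=
  (Real.measurable_exp.comp (by fun_prop)).mul
    (Finset.measurable_prod _ fun j _ => bcf_meas_ind (n+1) i j)

lemma bcf_meas_F (x : ℝ) (n : ℕ) :
    Measurable fun t : Fin (n+1) → ℝ =>
      (∑ i : Fin (n + 1), Real.exp (-(x ^ 2 * t i) / 2) *
        ∏ j ∈ Finset.univ.erase i, Set.indicator (Set.Icc (0 : ℝ) (t i)) 1 (t j)) ^ 2 := by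
  refine Measurable.pow_const ?_ 2
  refine Finset.measurable_sum _ fun i _ => Measurable.mul ?_
    (Finset.measurable_prod _ fun j _ => bcf_meas_ind (n+1) i j)
  exact Real.measurable_exp.comp (by fun_prop)

lemma bcf_sq (x : ℝ) (n : ℕ) (t : Fin (n+1) → ℝ) (ht : ∀ i j : Fin (n+1), i ≠ j → t i ≠ t j) :
    (∑ i : Fin (n + 1), Real.exp (-(x ^ 2 * t i) / 2) *
        ∏ j ∈ Finset.univ.erase i, Set.indicator (Set.Icc (0 : ℝ) (t i)) 1 (t j)) ^ 2
    = ∑ i : Fin (n + 1), Real.exp (-(x ^ 2 * t i)) *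
        ∏ j ∈ Finset.univ.erase i, Set.indicator (Set.Icc (0 : ℝ) (t i)) 1 (t j) := by
  set P : Fin (n+1) → ℝ :=
    fun i => ∏ j ∈ Finset.univ.erase i, Set.indicator (Set.Icc (0 : ℝ) (t i)) 1 (t j) with hP
  set a : Fin (n+1) → ℝ := fun i => Real.exp (-(x ^ 2 * t i) / 2) * P i with ha
  have key : ∀ i j : Fin (n+1), j ≠ i → a i * a j = 0 := by
    intro i j hji
    have hPz : P i = 0 ∨ P j = 0 := by
      by_contra h
      push_neg at h
      have h1 : Set.indicator (Set.Icc (0 : ℝ) (t i)) (1 : ℝ → ℝ) (t j) ≠ 0 :=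
        Finset.prod_ne_zero_iff.mp h.1 j (Finset.mem_erase.mpr ⟨hji, Finset.mem_univ j⟩)
      have h2 : Set.indicator (Set.Icc (0 : ℝ) (t j)) (1 : ℝ → ℝ) (t i) ≠ 0 :=
        Finset.prod_ne_zero_iff.mp h.2 i (Finset.mem_erase.mpr ⟨Ne.symm hji, Finset.mem_univ i⟩)
      have hm1 : t j ∈ Set.Icc (0:ℝ) (t i) := by
        by_contra hm; exact h1 (Set.indicator_of_notMem hm 1)
      have hm2 : t i ∈ Set.Icc (0:ℝ) (t j) := by
        by_contra hm; exact h2 (Set.indicator_of_notMem hm 1)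
      exact ht i j (Ne.symm hji) (le_antisymm hm2.2 hm1.2)
    rcases hPz with h | h <;> simp [ha, h, mul_comm, mul_assoc, mul_left_comm]
  have hsq : (∑ i, a i) ^ 2 = ∑ i, a i * a i := by
    rw [sq, Finset.sum_mul_sum]
    refine Finset.sum_congr rfl fun i _ => ?_
    exact Finset.sum_eq_single i (fun j _ hj => key i j hj) (fun h => absurd (Finset.mem_univ i) h)
  rw [hsq]
  refine Finset.sum_congr rfl fun i _ => ?_
  have hexp : Real.exp (-(x ^ 2 * t i) / 2) * Real.exp (-(x ^ 2 * t i) / 2)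
      = Real.exp (-(x ^ 2 * t i)) := by
    rw [← Real.exp_add]; ring_nf
  have hPP : P i * P i = P i := by
    rw [hP, ← Finset.prod_mul_distrib]
    exact Finset.prod_congr rfl fun j _ => bcf_ind_sq _ _
  calc a i * a i = (Real.exp (-(x ^ 2 * t i) / 2) * Real.exp (-(x ^ 2 * t i) / 2)) * (P i * P i) := by
        ring
    _ = Real.exp (-(x ^ 2 * t i)) * P i := by rw [hexp, hPP]

lemma bcf_single (T : ℝ) (x : ℝ) (n : ℕ) (i : Fin (n+1)) :
    ∫⁻ t, ENNReal.ofReal (Real.exp (-(x ^ 2 * t i)) *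
        ∏ j ∈ Finset.univ.erase i, Set.indicator (Set.Icc (0 : ℝ) (t i)) 1 (t j))
      ∂(Measure.pi fun _ : Fin (n+1) => (volume : Measure ℝ).restrict (Set.Icc (0:ℝ) T))
    = ∫⁻ s in Set.Icc (0:ℝ) T, ENNReal.ofReal (Real.exp (-(x^2*s)) * s^n) := by
  set μ : Measure ℝ := (volume : Measure ℝ).restrict (Set.Icc (0:ℝ) T) with hμ
  -- change of variables
  have hmp := (measurePreserving_piFinSuccAbove (fun _ : Fin (n+1) => μ) i).symm
  rw [← hmp.lintegral_comp ((bcf_meas_q x n i).ennreal_ofReal)]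
  have hsymm : ∀ p : ℝ × (Fin n → ℝ),
      (MeasurableEquiv.piFinSuccAbove (fun _ : Fin (n+1) => ℝ) i).symm p = Fin.insertNth (α := fun _ : Fin (n+1) => ℝ) i p.1 p.2 :=
    fun p => rfl
  have hprod : ∀ (s : ℝ) (u : Fin n → ℝ),
      ∏ j ∈ Finset.univ.erase i, Set.indicator (Set.Icc (0:ℝ) s) (1 : ℝ → ℝ)
        (Fin.insertNth (α := fun _ : Fin (n+1) => ℝ) i s u j)
      = ∏ k : Fin n, Set.indicator (Set.Icc (0:ℝ) s) (1 : ℝ → ℝ) (u k) := by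
    intro s u
    have himg : Finset.univ.erase i = Finset.image i.succAbove Finset.univ := by
      ext j
      simp only [Finset.mem_erase, Finset.mem_univ, and_true, Finset.mem_image, true_and]
      constructor
      · intro hj; exact Fin.exists_succAbove_eq hj
      · rintro ⟨k, rfl⟩; exact Fin.succAbove_ne i k
    rw [himg, Finset.prod_image (fun a _ b _ h => Fin.succAbove_right_injective h)]
    exact Finset.prod_congr rfl fun k _ => by rw [Fin.insertNth_apply_succAbove]
  have hind : ∀ (s : ℝ) (u : Fin n → ℝ),
      ENNReal.ofReal (∏ k : Fin n, Set.indicator (Set.Icc (0:ℝ) s) (1 : ℝ → ℝ) (u k))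
      = Set.indicator (Set.univ.pi fun _ : Fin n => Set.Icc (0:ℝ) s) (1 : (Fin n → ℝ) → ℝ≥0∞) u := by
    intro s u
    by_cases h : u ∈ Set.univ.pi fun _ : Fin n => Set.Icc (0:ℝ) s
    · rw [Set.indicator_of_mem h]
      have h1 : ∀ k : Fin n, Set.indicator (Set.Icc (0:ℝ) s) (1 : ℝ → ℝ) (u k) = 1 :=
        fun k => Set.indicator_of_mem (h k (Set.mem_univ k)) 1
      simp [h1]
    · rw [Set.indicator_of_notMem h]
      obtain ⟨k, hk⟩ : ∃ k, u k ∉ Set.Icc (0:ℝ) s := by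
        by_contra hc; push_neg at hc; exact h fun k _ => hc k
      rw [Finset.prod_eq_zero (Finset.mem_univ k) (Set.indicator_of_notMem hk 1)]
      simp
  have hfun : ∀ p : ℝ × (Fin n → ℝ),
      ENNReal.ofReal (Real.exp (-(x ^ 2 * ((MeasurableEquiv.piFinSuccAbove
          (fun _ : Fin (n+1) => ℝ) i).symm p) i)) *
        ∏ j ∈ Finset.univ.erase i, Set.indicator
          (Set.Icc (0 : ℝ) (((MeasurableEquiv.piFinSuccAbove (fun _ : Fin (n+1) => ℝ) i).symm p) i))
          1 (((MeasurableEquiv.piFinSuccAbove (fun _ : Fin (n+1) => ℝ) i).symm p) j))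
      = ENNReal.ofReal (Real.exp (-(x ^ 2 * p.1))) *
        Set.indicator (Set.univ.pi fun _ : Fin n => Set.Icc (0:ℝ) p.1) (1 : (Fin n → ℝ) → ℝ≥0∞) p.2 := by
    intro p
    rw [hsymm p, Fin.insertNth_apply_same,
      ENNReal.ofReal_mul (Real.exp_pos _).le, hprod p.1 p.2, hind p.1 p.2]
  rw [lintegral_congr hfun]
  have hsetmeas : MeasurableSet {q : ℝ × (Fin n → ℝ) | ∀ k, 0 ≤ q.2 k ∧ q.2 k ≤ q.1} := by
    have : {q : ℝ × (Fin n → ℝ) | ∀ k, 0 ≤ q.2 k ∧ q.2 k ≤ q.1}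
        = ⋂ k : Fin n, ({q : ℝ × (Fin n → ℝ) | 0 ≤ q.2 k} ∩ {q | q.2 k ≤ q.1}) := by
      ext q; simp [Set.mem_iInter, forall_and]
    rw [this]
    have hm : ∀ k : Fin n, Measurable fun q : ℝ × (Fin n → ℝ) => q.2 k :=
      fun k => (measurable_pi_apply k).comp measurable_snd
    exact MeasurableSet.iInter fun k =>
      (measurableSet_le measurable_const (hm k)).inter
        (measurableSet_le (hm k) measurable_fst)
  have hindrw : (fun p : ℝ × (Fin n → ℝ) =>
      Set.indicator (Set.univ.pi fun _ : Fin n => Set.Icc (0:ℝ) p.1)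
        (1 : (Fin n → ℝ) → ℝ≥0∞) p.2)
      = fun p => Set.indicator {q : ℝ × (Fin n → ℝ) | ∀ k, 0 ≤ q.2 k ∧ q.2 k ≤ q.1}
        (1 : (ℝ × (Fin n → ℝ)) → ℝ≥0∞) p := by
    funext p
    by_cases h : ∀ k, 0 ≤ p.2 k ∧ p.2 k ≤ p.1
    · have hm1 : p.2 ∈ Set.univ.pi fun _ : Fin n => Set.Icc (0:ℝ) p.1 :=
        fun k _ => Set.mem_Icc.mpr (h k)
      rw [Set.indicator_of_mem hm1, Set.indicator_of_mem (h : p ∈ _)]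
      rfl
    · have hm1 : p.2 ∉ Set.univ.pi fun _ : Fin n => Set.Icc (0:ℝ) p.1 :=
        fun hc => h fun k => Set.mem_Icc.mp (hc k (Set.mem_univ k))
      rw [Set.indicator_of_notMem hm1, Set.indicator_of_notMem (h : p ∉ _)]
  have hmeas2 : Measurable fun p : ℝ × (Fin n → ℝ) =>
      ENNReal.ofReal (Real.exp (-(x^2*p.1))) *
        Set.indicator (Set.univ.pi fun _ : Fin n => Set.Icc (0:ℝ) p.1)
          (1 : (Fin n → ℝ) → ℝ≥0∞) p.2 := by
    refine Measurable.mul ?_ ?_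
    · exact (Real.measurable_exp.comp (measurable_fst.const_mul (x^2)).neg).ennreal_ofReal
    · rw [hindrw]
      exact measurable_const.indicator hsetmeas
  rw [lintegral_prod _ hmeas2.aemeasurable]
  have hinner : ∀ s : ℝ,
      ∫⁻ u, ENNReal.ofReal (Real.exp (-(x^2*s))) *
        Set.indicator (Set.univ.pi fun _ : Fin n => Set.Icc (0:ℝ) s)
          (1 : (Fin n → ℝ) → ℝ≥0∞) u ∂(Measure.pi fun _ : Fin n => μ)
      = ENNReal.ofReal (Real.exp (-(x^2*s))) * (μ (Set.Icc (0:ℝ) s))^n := by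
    intro s
    rw [lintegral_const_mul' _ _ ENNReal.ofReal_ne_top,
      lintegral_indicator_one (MeasurableSet.univ_pi fun _ => measurableSet_Icc),
      Measure.pi_pi]
    simp [Finset.prod_const]
  simp only [hinner]
  rw [hμ]
  refine setLIntegral_congr_fun measurableSet_Icc (fun s hs => ?_)
  have hμIcc : (volume : Measure ℝ).restrict (Set.Icc (0:ℝ) T) (Set.Icc (0:ℝ) s)
      = ENNReal.ofReal s := by
    rw [Measure.restrict_apply measurableSet_Icc,
      Set.inter_eq_self_of_subset_left (Set.Icc_subset_Icc_right hs.2),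
      Real.volume_Icc, sub_zero]
  rw [hμIcc, ← ENNReal.ofReal_pow hs.1, ← ENNReal.ofReal_mul (Real.exp_pos _).le]

lemma bcf_step (T x : ℝ) (n : ℕ) :
    ∫ t : Fin (n + 1) → ℝ in Set.univ.pi (fun _ => Set.Icc (0 : ℝ) T),
        (∑ i : Fin (n + 1), Real.exp (-(x ^ 2 * t i) / 2) *
          ∏ j ∈ Finset.univ.erase i, Set.indicator (Set.Icc (0 : ℝ) (t i)) 1 (t j)) ^ 2
    = (((n+1 : ℕ) : ℝ≥0∞) * ∫⁻ s in Set.Icc (0:ℝ) T,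
        ENNReal.ofReal (Real.exp (-(x^2*s)) * s^n)).toReal := by
  rw [← bcf_pi_restrict T (n+1)]
  set pm : Measure (Fin (n+1) → ℝ) :=
    Measure.pi fun _ : Fin (n+1) => (volume : Measure ℝ).restrict (Set.Icc (0:ℝ) T) with hpm
  rw [integral_eq_lintegral_of_nonneg_ae (Filter.Eventually.of_forall fun t => sq_nonneg _)
    (bcf_meas_F x n).aestronglyMeasurable]
  congr 1
  have hGc : pm {t : Fin (n+1) → ℝ | ¬ ∀ i j : Fin (n+1), i ≠ j → t i ≠ t j} = 0 := by
    have hsub : {t : Fin (n+1) → ℝ | ¬ ∀ i j : Fin (n+1), i ≠ j → t i ≠ t j}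
        ⊆ ⋃ (i : Fin (n+1)) (j : Fin (n+1)) (_ : i ≠ j), {t : Fin (n+1) → ℝ | t i = t j} := by
      intro t ht
      push_neg at ht
      obtain ⟨i, j, hij, hte⟩ := ht
      exact Set.mem_iUnion.mpr ⟨i, Set.mem_iUnion.mpr ⟨j, Set.mem_iUnion.mpr ⟨hij, hte⟩⟩⟩
    have hvol : (volume : Measure (Fin (n+1) → ℝ))
        (⋃ (i : Fin (n+1)) (j : Fin (n+1)) (_ : i ≠ j), {t : Fin (n+1) → ℝ | t i = t j}) = 0 :=
      measure_iUnion_null fun i => measure_iUnion_null fun j => measure_iUnion_null fun hij =>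
        bcf_diag_null (n+1) i j hij
    have hle : pm ≤ (volume : Measure (Fin (n+1) → ℝ)) := by
      rw [hpm, bcf_pi_restrict]; exact Measure.restrict_le_self
    exact le_antisymm ((measure_mono hsub).trans ((Measure.le_iff'.1 hle _).trans hvol.le))
      bot_le
  have hae : ∀ᵐ t ∂pm, ∀ i j : Fin (n+1), i ≠ j → t i ≠ t j := by
    rw [ae_iff]; exact hGc
  have heq : (fun t : Fin (n+1) → ℝ => ENNReal.ofReal
      ((∑ i : Fin (n + 1), Real.exp (-(x ^ 2 * t i) / 2) *
        ∏ j ∈ Finset.univ.erase i, Set.indicator (Set.Icc (0 : ℝ) (t i)) 1 (t j)) ^ 2))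
      =ᵐ[pm] fun t => ∑ i : Fin (n+1), ENNReal.ofReal (Real.exp (-(x^2 * t i)) *
        ∏ j ∈ Finset.univ.erase i, Set.indicator (Set.Icc (0:ℝ) (t i)) 1 (t j)) := by
    filter_upwards [hae] with t ht
    rw [bcf_sq x n t ht]
    exact ENNReal.ofReal_sum_of_nonneg fun i _ =>
      mul_nonneg (Real.exp_pos _).le
        (Finset.prod_nonneg fun j _ => Set.indicator_nonneg (fun _ _ => zero_le_one) _)
  rw [lintegral_congr_ae heq,
    lintegral_finset_sum _ (fun i _ => (bcf_meas_q x n i).ennreal_ofReal)]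
  rw [Finset.sum_congr rfl (fun i _ => bcf_single T x n i), Finset.sum_const,
    Finset.card_univ, Fintype.card_fin, nsmul_eq_mul]

/-- For `T > 0` and `x ∈ ℝ`,
`∑_{n=0}^∞ (x^{2n}/(n+1)!) ∫_{[0,T]^{n+1}}
  ( ∑_{i=1}^{n+1} e^{−x² t_i/2} ∏_{j≠i} 𝟙_{[0,t_i]}(t_j) )² dt = T`. -/
theorem brownian_current_fourier_L2_norm (T : ℝ) (hT : 0 < T) (x : ℝ) :
    ∑' n : ℕ, (x ^ (2 * n) / (n + 1).factorial) *
      ∫ t : Fin (n + 1) → ℝ in Set.univ.pi (fun _ => Set.Icc (0 : ℝ) T),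
        (∑ i : Fin (n + 1), Real.exp (-(x ^ 2 * t i) / 2) *
          ∏ j ∈ Finset.univ.erase i, Set.indicator (Set.Icc (0 : ℝ) (t i)) 1 (t j)) ^ 2
    = T := by
  have c0 : (0:ℝ) ≤ x^2 := sq_nonneg x
  set V : ℕ → ℝ≥0∞ := fun n =>
    ∫⁻ s in Set.Icc (0:ℝ) T, ENNReal.ofReal (Real.exp (-(x^2*s)) * s^n) with hV
  set U : ℕ → ℝ≥0∞ := fun n => ENNReal.ofReal ((x^2)^n / n.factorial) * V n with hU
  have hterm : ∀ n : ℕ, (x ^ (2 * n) / (n + 1).factorial) *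
      (∫ t : Fin (n + 1) → ℝ in Set.univ.pi (fun _ => Set.Icc (0 : ℝ) T),
        (∑ i : Fin (n + 1), Real.exp (-(x ^ 2 * t i) / 2) *
          ∏ j ∈ Finset.univ.erase i, Set.indicator (Set.Icc (0 : ℝ) (t i)) 1 (t j)) ^ 2)
      = (U n).toReal := by
    intro n
    rw [bcf_step T x n, hU]
    rw [ENNReal.toReal_mul, ENNReal.toReal_mul, ENNReal.toReal_natCast,
      ENNReal.toReal_ofReal (div_nonneg (pow_nonneg c0 n) (Nat.cast_nonneg _))]
    have hcoef : x ^ (2*n) / ((n+1).factorial : ℝ) * ((n+1 : ℕ) : ℝ)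
        = (x^2)^n / (n.factorial : ℝ) := by
      rw [pow_mul, Nat.factorial_succ, Nat.cast_mul]
      have h1 : ((n+1 : ℕ) : ℝ) ≠ 0 := Nat.cast_ne_zero.mpr (Nat.succ_ne_zero n)
      have h2 : ((n.factorial : ℕ) : ℝ) ≠ 0 := Nat.cast_ne_zero.mpr n.factorial_ne_zero
      field_simp
    rw [← mul_assoc, hcoef]
  rw [tsum_congr hterm]
  have hmeasn : ∀ n : ℕ, Measurable fun s : ℝ =>
      ENNReal.ofReal ((x^2)^n / n.factorial) *
        ENNReal.ofReal (Real.exp (-(x^2*s)) * s^n) := by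
    intro n
    refine measurable_const.mul (Measurable.ennreal_ofReal ?_)
    exact (Real.measurable_exp.comp (measurable_id.const_mul (x^2)).neg).mul
      (measurable_id.pow_const n)
  have hsum : ∑' n, U n = ENNReal.ofReal T := by
    have hUm : ∀ n : ℕ, U n = ∫⁻ s in Set.Icc (0:ℝ) T,
        ENNReal.ofReal ((x^2)^n / n.factorial) *
          ENNReal.ofReal (Real.exp (-(x^2*s)) * s^n) := fun n =>
      (lintegral_const_mul' _ _ ENNReal.ofReal_ne_top).symm
    rw [tsum_congr hUm, ← lintegral_tsum (fun n => (hmeasn n).aemeasurable)]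
    have hpt : ∀ s ∈ Set.Icc (0:ℝ) T,
        ∑' n : ℕ, ENNReal.ofReal ((x^2)^n / n.factorial) *
          ENNReal.ofReal (Real.exp (-(x^2*s)) * s^n) = 1 := by
      intro s hs
      have hs0 : (0:ℝ) ≤ s := hs.1
      have h1 : ∀ n : ℕ, ENNReal.ofReal ((x^2)^n / n.factorial) *
          ENNReal.ofReal (Real.exp (-(x^2*s)) * s^n)
          = ENNReal.ofReal ((x^2*s)^n / n.factorial * Real.exp (-(x^2*s))) := by
        intro n
        rw [← ENNReal.ofReal_mul (div_nonneg (pow_nonneg c0 n) (Nat.cast_nonneg _))]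
        congr 1
        rw [mul_pow]; ring
      rw [tsum_congr h1, ← ENNReal.ofReal_tsum_of_nonneg
        (fun n => mul_nonneg (div_nonneg (pow_nonneg (mul_nonneg c0 hs0) n)
          (Nat.cast_nonneg _)) (Real.exp_pos _).le)
        ((Real.summable_pow_div_factorial _).mul_right _)]
      rw [tsum_mul_right]
      have hexp : ∑' n : ℕ, (x^2*s)^n / (n.factorial : ℝ) = Real.exp (x^2*s) := by
        rw [Real.exp_eq_exp_ℝ, NormedSpace.exp_eq_tsum_div]
      rw [hexp, ← Real.exp_add, add_neg_cancel, Real.exp_zero, ENNReal.ofReal_one]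
    rw [setLIntegral_congr_fun measurableSet_Icc hpt,
      setLIntegral_one, Real.volume_Icc, sub_zero]
  have hUne : ∀ n, U n ≠ ⊤ := fun n =>
    ne_top_of_le_ne_top (hsum ▸ ENNReal.ofReal_ne_top) (ENNReal.le_tsum n)
  rw [← ENNReal.tsum_toReal_eq hUne, hsum, ENNReal.toReal_ofReal hT.le]
end

section
/- Let 0 < a < T, x ∈ ℝ and α < −1/2. Then the series ∑_{n=0}^∞ (n+2)^α · n! · ∫_a^T ( p_s(x) H_n(x/√s) )² ds converges (is finite). (This is the computation showing that the Brownian current ξ(x) = ∫_a^T δ(x−B_s) dB_s belongs to the Sobolev–Watanabe space 𝔻^{−α,2} for every α > 1/2.) -/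
open MeasureTheory Real

/-- The centered Gaussian density of variance `s`: `p_s(x) = (2πs)^{-1/2} exp(−x²/(2s))`. -/
noncomputable def gaussianKernel (s x : ℝ) : ℝ :=
  (Real.sqrt (2 * Real.pi * s))⁻¹ * Real.exp (-x ^ 2 / (2 * s))

/-- The normalized Hermite polynomial
`H_n(x) = ((−1)^n/n!) e^{x²/2} (d^n/dx^n) e^{−x²/2}`. -/
noncomputable def hermiteH (n : ℕ) (x : ℝ) : ℝ :=
  ((-1) ^ n / n.factorial) * Real.exp (x ^ 2 / 2) *
    iteratedDeriv n (fun y => Real.exp (-y ^ 2 / 2)) x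


section aux
open Set Complex FourierTransform

lemma natcast_neg_one_lt (n : ℕ) : (-1:ℝ) < n :=
  lt_of_lt_of_le neg_one_lt_zero (Nat.cast_nonneg n)

lemma integral_abs_pow_mul_exp_neg_mul_sq {b : ℝ} (hb : 0 < b) (n : ℕ) :
    ∫ x : ℝ, |x| ^ n * Real.exp (-b * x ^ 2)
      = b ^ (-((n : ℝ) + 1) / 2) * Real.Gamma (((n : ℝ) + 1) / 2) := by
  have h1 : ∫ x : ℝ, |x| ^ n * Real.exp (-b * x ^ 2)
      = 2 * ∫ x in Ioi (0:ℝ), x ^ n * Real.exp (-b * x ^ 2) := by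
    rw [← integral_comp_abs (f := fun x => x ^ n * Real.exp (-b * x ^ 2))]
    congr 1 with x
    rw [_root_.sq_abs]
  have h2 : ∫ x in Ioi (0:ℝ), x ^ n * Real.exp (-b * x ^ 2)
      = b ^ (-((n:ℝ) + 1) / 2) * (1 / 2) * Real.Gamma (((n:ℝ) + 1) / 2) := by
    rw [← integral_rpow_mul_exp_neg_mul_rpow zero_lt_two (natcast_neg_one_lt n) hb]
    refine setIntegral_congr_fun measurableSet_Ioi (fun x hx => ?_)
    rw [Real.rpow_natCast, Real.rpow_two]
  rw [h1, h2]; ring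

lemma integrable_abs_pow_mul_exp_neg_mul_sq {b : ℝ} (hb : 0 < b) (n : ℕ) :
    Integrable (fun x : ℝ => |x| ^ n * Real.exp (-b * x ^ 2)) := by
  have h2k : Integrable (fun x : ℝ => x ^ (2 * n) * Real.exp (-b * x ^ 2)) := by
    have := integrable_rpow_mul_exp_neg_mul_sq hb (s := ((2 * n : ℕ) : ℝ))
      (natcast_neg_one_lt _)
    simpa only [Real.rpow_natCast] using this
  have h0 : Integrable (fun x : ℝ => Real.exp (-b * x ^ 2)) := integrable_exp_neg_mul_sq hb
  refine (h0.add h2k).mono' (Continuous.aestronglyMeasurable (by continuity)) ?_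
  filter_upwards with x
  have hsq : x ^ (2 * n) = (x ^ 2) ^ n := by rw [pow_mul]
  have hx : |x| ^ n ≤ 1 + x ^ (2 * n) := by
    rcases le_or_gt (|x|) 1 with h | h
    · have h1 := pow_le_one₀ (abs_nonneg x) h (n := n)
      have h2 : (0:ℝ) ≤ (x ^ 2) ^ n := by positivity
      rw [hsq]; linarith
    · have h1 : |x| ^ n ≤ |x| ^ (2 * n) := pow_le_pow_right₀ h.le (by omega)
      have h2 : |x| ^ (2 * n) = x ^ (2 * n) := by
        rw [← _root_.abs_pow, abs_eq_self, hsq]; positivity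
      linarith
  have he : 0 < Real.exp (-b * x ^ 2) := Real.exp_pos _
  rw [Real.norm_eq_abs, _root_.abs_of_nonneg (by positivity), Pi.add_apply]
  nlinarith

lemma iteratedDeriv_ofReal_comp {f : ℝ → ℝ} (hf : ContDiff ℝ ⊤ f) (n : ℕ) :
    iteratedDeriv n (fun y : ℝ => ((f y : ℝ) : ℂ)) = fun x => ((iteratedDeriv n f x : ℝ) : ℂ) := by
  induction n with
  | zero => simp [iteratedDeriv_zero]
  | succ n ih =>
    rw [iteratedDeriv_succ, iteratedDeriv_succ, ih]
    funext x
    exact (((hf.differentiable_iteratedDeriv n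
      (by exact_mod_cast WithTop.coe_lt_top (n:ℕ∞)) x).hasDerivAt).ofReal_comp).deriv

lemma gauss_contDiff : ContDiff ℝ ⊤ (fun y : ℝ => Real.exp (-y ^ 2 / 2)) :=
  (((contDiff_id (𝕜 := ℝ) (E := ℝ)).pow 2).neg.div_const 2).exp

noncomputable def hDens : ℝ → ℂ :=
  fun ξ => (Real.sqrt (2 * π) : ℂ) * Complex.exp (((-(2 * π ^ 2) * ξ ^ 2 : ℝ) : ℂ))

lemma hDens_norm (ξ : ℝ) : ‖hDens ξ‖ = Real.sqrt (2 * π) * Real.exp (-(2 * π ^ 2) * ξ ^ 2) := by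
  rw [hDens, norm_mul, Complex.norm_real, Real.norm_eq_abs,
    _root_.abs_of_nonneg (Real.sqrt_nonneg _),
    Complex.norm_exp, Complex.ofReal_re]

lemma fourier_hDens : 𝓕 hDens = fun t : ℝ => Complex.exp (-(t : ℂ) ^ 2 / 2) := by
  have hb : (0:ℝ) < (2 * (π:ℂ)).re := by simp [Real.pi_pos]
  have key := fourier_gaussian_pi (b := 2 * (π:ℂ)) hb
  have hfun : hDens = (Real.sqrt (2 * π) : ℂ) •
      (fun ξ : ℝ => Complex.exp (-(π:ℂ) * (2 * (π:ℂ)) * (ξ:ℝ) ^ 2)) := by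
    funext ξ
    rw [hDens, Pi.smul_apply, smul_eq_mul]
    congr 1
    push_cast
    ring_nf
  rw [hfun]
  have hsmul : 𝓕 ((Real.sqrt (2 * π) : ℂ) •
      (fun ξ : ℝ => Complex.exp (-(π:ℂ) * (2 * (π:ℂ)) * (ξ:ℝ) ^ 2))) =
      (Real.sqrt (2 * π) : ℂ) •
        𝓕 (fun ξ : ℝ => Complex.exp (-(π:ℂ) * (2 * (π:ℂ)) * (ξ:ℝ) ^ 2)) :=
    VectorFourier.fourierIntegral_const_smul _ _ _ _ _
  rw [hsmul, key]
  funext t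
  have hcpow : (2 * (π:ℂ)) ^ (1 / 2 : ℂ) = (Real.sqrt (2 * π) : ℂ) := by
    rw [show (2 * (π:ℂ)) = ((2 * π : ℝ) : ℂ) by push_cast; ring,
      show (1 / 2 : ℂ) = ((1 / 2 : ℝ) : ℂ) by push_cast; ring,
      ← Complex.ofReal_cpow (by positivity), Real.sqrt_eq_rpow]
  have hsqrt_ne : (Real.sqrt (2 * π) : ℂ) ≠ 0 := by
    simp only [ne_eq, Complex.ofReal_eq_zero]
    positivity
  rw [Pi.smul_apply, smul_eq_mul, hcpow]
  rw [show -(π:ℂ) / (2 * π) = -(1/2 : ℂ) by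
    rw [div_eq_iff (by simpa using Complex.ofReal_ne_zero.mpr Real.pi_ne_zero : (2 * (π:ℂ)) ≠ 0)]
    ring]
  rw [show (-(1/2 : ℂ)) * (t:ℂ)^2 = -(t:ℂ)^2/2 by ring]
  rw [← mul_assoc, mul_one_div, div_self hsqrt_ne, one_mul]

lemma integrable_pow_smul_hDens (k : ℕ) : Integrable (fun ξ : ℝ => ξ ^ k • hDens ξ) := by
  have base := integrable_abs_pow_mul_exp_neg_mul_sq (b := 2 * π ^ 2) (by positivity) k
  refine (base.const_mul (Real.sqrt (2 * π))).mono' ?_ ?_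
  · have hc : Continuous hDens := by
      unfold hDens
      exact continuous_const.mul (Complex.continuous_exp.comp (Complex.continuous_ofReal.comp
        (by continuity)))
    exact ((continuous_pow k).smul hc).aestronglyMeasurable
  · filter_upwards with ξ
    rw [norm_smul, hDens_norm, Real.norm_eq_abs]
    refine le_of_eq ?_
    rw [_root_.abs_pow]
    ring

/-- The key uniform bound on the iterated derivatives of the Gaussian. -/
lemma abs_iteratedDeriv_gauss_le (n : ℕ) (x : ℝ) :
    |iteratedDeriv n (fun y : ℝ => Real.exp (-y ^ 2 / 2)) x|
      ≤ Real.sqrt (2 * π) * (2 * π) ^ n *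
        ((2 * π ^ 2) ^ (-((n:ℝ) + 1) / 2) * Real.Gamma (((n:ℝ) + 1) / 2)) := by
  have h1 : iteratedDeriv n (𝓕 hDens)
      = 𝓕 (fun ξ : ℝ => (-2 * (π:ℂ) * Complex.I * ξ) ^ n • hDens ξ) :=
    Real.iteratedDeriv_fourier (N := (n:ℕ∞))
      (fun k _ => integrable_pow_smul_hDens k) le_rfl
  have h2 : 𝓕 hDens = fun y : ℝ => ((Real.exp (-y ^ 2 / 2) : ℝ) : ℂ) := by
    rw [fourier_hDens]
    funext y
    rw [Complex.ofReal_exp]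
    push_cast
    ring_nf
  have h3 := congrFun (iteratedDeriv_ofReal_comp gauss_contDiff n) x
  have habs : |iteratedDeriv n (fun y : ℝ => Real.exp (-y ^ 2 / 2)) x|
      = ‖iteratedDeriv n (𝓕 hDens) x‖ := by
    rw [h2, h3, Complex.norm_real, Real.norm_eq_abs]
  rw [habs, h1]
  have hle : ‖𝓕 (fun ξ : ℝ => (-2 * (π:ℂ) * Complex.I * ξ) ^ n • hDens ξ) x‖
      ≤ ∫ ξ : ℝ, ‖(-2 * (π:ℂ) * Complex.I * ξ) ^ n • hDens ξ‖ :=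
    VectorFourier.norm_fourierIntegral_le_integral_norm _ _ _ _ _
  refine hle.trans ?_
  have heq : ∀ ξ : ℝ, ‖(-2 * (π:ℂ) * Complex.I * ξ) ^ n • hDens ξ‖
      = (Real.sqrt (2 * π) * (2 * π) ^ n) * (|ξ| ^ n * Real.exp (-(2 * π ^ 2) * ξ ^ 2)) := by
    intro ξ
    rw [norm_smul, norm_pow, hDens_norm]
    have : ‖-2 * (π:ℂ) * Complex.I * ξ‖ = 2 * π * |ξ| := by
      rw [norm_mul, norm_mul, norm_mul]
      simp [Complex.norm_real, _root_.abs_of_nonneg Real.pi_pos.le]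
    rw [this, mul_pow (2 * π), mul_pow 2 π]
    ring
  rw [MeasureTheory.integral_congr_ae (Filter.Eventually.of_forall heq),
    MeasureTheory.integral_const_mul,
    integral_abs_pow_mul_exp_neg_mul_sq (by positivity : (0:ℝ) < 2 * π ^ 2) n,
    mul_assoc]

end aux


noncomputable def Bconst (n : ℕ) : ℝ :=
  Real.sqrt (2 * π) * (2 * π) ^ n *
    ((2 * π ^ 2) ^ (-((n:ℝ) + 1) / 2) * Real.Gamma (((n:ℝ) + 1) / 2))

lemma Bconst_sq (n : ℕ) :
    (Bconst n) ^ 2 = 2 ^ n * Real.Gamma (((n:ℝ) + 1) / 2) ^ 2 / π := by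
  have hpos : (0:ℝ) < 2 * π ^ 2 := by positivity
  have h1 : (((2 * π ^ 2 : ℝ)) ^ (-((n:ℝ)+1)/2))^2 = ((2 * π ^ 2 : ℝ)^(n+1))⁻¹ := by
    rw [← Real.rpow_natCast ((2 * π ^ 2 : ℝ) ^ (-((n:ℝ)+1)/2)) 2, ← Real.rpow_mul hpos.le,
      show (-((n:ℝ)+1)/2) * ((2:ℕ):ℝ) = -((n:ℝ)+1) by push_cast; ring,
      Real.rpow_neg hpos.le,
      show ((n:ℝ)+1) = ((n+1:ℕ):ℝ) by push_cast; ring, Real.rpow_natCast]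
  have h2 : (((2:ℝ)*π)^n)^2 = 2^n * (2 * π ^ 2 : ℝ)^n := by
    rw [← pow_mul, show n*2 = 2*n by ring, pow_mul, show ((2:ℝ)*π)^2 = 2*(2*π^2) by ring,
      mul_pow]
  have h2pi : Real.sqrt (2 * π) ^ 2 = 2 * π := Real.sq_sqrt (by positivity)
  have hA : (2 * π ^ 2 : ℝ)^n ≠ 0 := by positivity
  have hπ : (π:ℝ) ≠ 0 := Real.pi_ne_zero
  have expand : Bconst n ^ 2 = Real.sqrt (2*π) ^ 2 * ((2*π)^n)^2 *
      (((2 * π ^ 2 : ℝ) ^ (-((n:ℝ)+1)/2))^2 * Real.Gamma (((n:ℝ) + 1) / 2) ^ 2) := by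
    rw [Bconst]; ring
  rw [expand, h2pi, h2, h1, pow_succ]
  field_simp
  ring

lemma gamma_key_bound (n : ℕ) :
    2 ^ n * Real.Gamma (((n:ℝ) + 1) / 2) ^ 2 / π
      ≤ 2 / Real.sqrt ((n:ℝ) + 1) * (n.factorial : ℝ) := by
  induction n using Nat.strong_induction_on with
  | _ n ih =>
    match n with
    | 0 =>
      simp only [Nat.cast_zero, pow_zero, one_mul, Nat.factorial_zero, Nat.cast_one, mul_one]
      rw [show ((0:ℝ) + 1) / 2 = 1/2 by norm_num, Real.Gamma_one_half_eq,
        Real.sq_sqrt Real.pi_pos.le, div_self Real.pi_ne_zero]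
      rw [show ((0:ℝ) + 1) = 1 by norm_num, Real.sqrt_one]
      norm_num
    | 1 =>
      simp only [Nat.cast_one, Nat.factorial_one]
      rw [show ((1:ℝ) + 1) / 2 = 1 by norm_num, Real.Gamma_one]
      have hs2 : Real.sqrt 2 ≤ 2 := by
        nlinarith [Real.sq_sqrt (by norm_num : (0:ℝ) ≤ 2), Real.sqrt_nonneg 2]
      have hpi : (2:ℝ) ≤ π := by linarith [Real.pi_gt_three]
      have hlhs : 2 * 1 ^ 2 / π ≤ 1 := by
        rw [one_pow, mul_one, div_le_one Real.pi_pos]; exact hpi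
      have hrhs : (1:ℝ) ≤ 2 / Real.sqrt (1 + 1) * 1 := by
        rw [mul_one, le_div_iff₀ (by positivity : (0:ℝ) < Real.sqrt (1+1)), one_mul]
        nlinarith [Real.sq_sqrt (by norm_num : (0:ℝ) ≤ (1:ℝ)+1), Real.sqrt_nonneg ((1:ℝ)+1)]
      linarith
    | (m + 2) =>
      have ihm := ih m (by omega)
      have hy : ((((m+2:ℕ)):ℝ) + 1)/2 = ((m:ℝ)+1)/2 + 1 := by push_cast; ring
      have hyne : ((m:ℝ)+1)/2 ≠ 0 := by positivity
      have hfac : (((m+2).factorial : ℕ) : ℝ) = ((m:ℝ)+2)*(((m:ℝ)+1)*(m.factorial:ℝ)) := by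
        rw [Nat.factorial_succ, Nat.factorial_succ]; push_cast; ring
      rw [hy, Real.Gamma_add_one hyne, hfac,
        show (((m+2:ℕ)):ℝ) + 1 = (m:ℝ) + 3 by push_cast; ring]
      set G := Real.Gamma (((m:ℝ)+1)/2)
      have h1 : (0:ℝ) < Real.sqrt ((m:ℝ)+1) := Real.sqrt_pos.mpr (by positivity)
      have h3 : (0:ℝ) < Real.sqrt ((m:ℝ)+3) := Real.sqrt_pos.mpr (by positivity)
      have key : Real.sqrt ((m:ℝ)+3) * ((m:ℝ)+1) ≤ Real.sqrt ((m:ℝ)+1) * ((m:ℝ)+2) := by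
        have hsq := Real.sqrt_le_sqrt
          (show ((m:ℝ)+3)*((m:ℝ)+1)^2 ≤ ((m:ℝ)+1)*((m:ℝ)+2)^2 by nlinarith)
        rwa [Real.sqrt_mul (by positivity), Real.sqrt_mul (by positivity),
          Real.sqrt_sq (by positivity), Real.sqrt_sq (by positivity)] at hsq
      have hLHS : 2^(m+2) * ((((m:ℝ)+1)/2) * G)^2 / π = ((m:ℝ)+1)^2 * (2^m * G^2 / π) := by
        rw [pow_succ, pow_succ]; ring
      rw [hLHS]
      have step1 : ((m:ℝ)+1)^2 * (2^m * G^2 / π)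
          ≤ ((m:ℝ)+1)^2 * (2 / Real.sqrt ((m:ℝ)+1) * (m.factorial:ℝ)) :=
        mul_le_mul_of_nonneg_left ihm (by positivity)
      refine step1.trans ?_
      rw [show ((m:ℝ)+1)^2 * (2 / Real.sqrt ((m:ℝ)+1) * (m.factorial:ℝ))
          = 2*((m:ℝ)+1)^2*(m.factorial:ℝ) / Real.sqrt ((m:ℝ)+1) by ring,
        show 2 / Real.sqrt ((m:ℝ)+3) * (((m:ℝ)+2)*(((m:ℝ)+1)*(m.factorial:ℝ)))
          = 2*((m:ℝ)+2)*(((m:ℝ)+1)*(m.factorial:ℝ)) / Real.sqrt ((m:ℝ)+3) by ring,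
        div_le_div_iff₀ h1 h3]
      have hmul := mul_le_mul_of_nonneg_left key
        (show (0:ℝ) ≤ 2*((m:ℝ)+1)*(m.factorial:ℝ) by positivity)
      nlinarith [hmul, Nat.cast_nonneg (α := ℝ) m.factorial]

section main
open Set intervalIntegral

lemma Bconst_nonneg (n : ℕ) : 0 ≤ Bconst n := by
  have hG := Real.Gamma_pos_of_pos (show (0:ℝ) < ((n:ℝ)+1)/2 by positivity)
  rw [Bconst]
  have h1 : (0:ℝ) ≤ Real.sqrt (2*π) := Real.sqrt_nonneg _
  have h2 : (0:ℝ) ≤ (2*π)^n := by positivity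
  have h3 : (0:ℝ) ≤ (2 * π ^ 2 : ℝ) ^ (-((n:ℝ) + 1) / 2) := Real.rpow_nonneg (by positivity) _
  positivity

lemma prod_bound (n : ℕ) {s : ℝ} (hs : 0 < s) (x : ℝ) :
    (gaussianKernel s x * hermiteH n (x / Real.sqrt s)) ^ 2
      ≤ Bconst n ^ 2 / ((n.factorial : ℝ) ^ 2 * (2 * π * s)) := by
  have hfac : (0:ℝ) < (n.factorial : ℝ) := by exact_mod_cast n.factorial_pos
  have h2πs : (0:ℝ) < 2 * π * s := by positivity
  have hsqrt : Real.sqrt (2 * π * s) ^ 2 = 2 * π * s := Real.sq_sqrt h2πs.le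
  have hy : (x / Real.sqrt s) ^ 2 = x ^ 2 / s := by
    rw [div_pow, Real.sq_sqrt hs.le]
  have hD := abs_iteratedDeriv_gauss_le n (x / Real.sqrt s)
  have habs : |gaussianKernel s x * hermiteH n (x / Real.sqrt s)|
      ≤ (Real.sqrt (2 * π * s))⁻¹ * ((n.factorial : ℝ)⁻¹ * Bconst n) := by
    rw [abs_mul, gaussianKernel, hermiteH]
    have hgk : |(Real.sqrt (2 * π * s))⁻¹ * Real.exp (-x ^ 2 / (2 * s))|
        = (Real.sqrt (2 * π * s))⁻¹ * Real.exp (-x ^ 2 / (2 * s)) := by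
      refine _root_.abs_of_nonneg (by positivity)
    have hhh : |((-1:ℝ) ^ n / n.factorial) * Real.exp ((x / Real.sqrt s) ^ 2 / 2) *
          iteratedDeriv n (fun y => Real.exp (-y ^ 2 / 2)) (x / Real.sqrt s)|
        ≤ (n.factorial : ℝ)⁻¹ * Real.exp (x ^ 2 / (2*s)) * Bconst n := by
      rw [abs_mul, abs_mul, abs_div, abs_pow, abs_neg, abs_one, one_pow,
        Nat.abs_cast, _root_.abs_of_nonneg (Real.exp_nonneg _), hy]
      rw [show x^2/s/2 = x^2/(2*s) by ring, one_div]
      exact mul_le_mul_of_nonneg_left hD (by positivity)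
    rw [hgk]
    calc (Real.sqrt (2 * π * s))⁻¹ * Real.exp (-x ^ 2 / (2 * s)) *
          |((-1:ℝ) ^ n / n.factorial) * Real.exp ((x / Real.sqrt s) ^ 2 / 2) *
            iteratedDeriv n (fun y => Real.exp (-y ^ 2 / 2)) (x / Real.sqrt s)|
        ≤ (Real.sqrt (2 * π * s))⁻¹ * Real.exp (-x ^ 2 / (2 * s)) *
            ((n.factorial : ℝ)⁻¹ * Real.exp (x ^ 2 / (2*s)) * Bconst n) := by
          exact mul_le_mul_of_nonneg_left hhh (by positivity)
      _ = (Real.sqrt (2 * π * s))⁻¹ * ((n.factorial : ℝ)⁻¹ * Bconst n) *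
            (Real.exp (-x ^ 2 / (2 * s)) * Real.exp (x ^ 2 / (2*s))) := by ring
      _ = (Real.sqrt (2 * π * s))⁻¹ * ((n.factorial : ℝ)⁻¹ * Bconst n) := by
          rw [← Real.exp_add, neg_div, neg_add_cancel, Real.exp_zero, mul_one]
  calc (gaussianKernel s x * hermiteH n (x / Real.sqrt s)) ^ 2
      = |gaussianKernel s x * hermiteH n (x / Real.sqrt s)| ^ 2 := (sq_abs _).symm
    _ ≤ ((Real.sqrt (2 * π * s))⁻¹ * ((n.factorial : ℝ)⁻¹ * Bconst n)) ^ 2 := by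
        exact pow_le_pow_left₀ (abs_nonneg _) habs 2
    _ = Bconst n ^ 2 / ((n.factorial : ℝ) ^ 2 * (2 * π * s)) := by
        rw [mul_pow, mul_pow, inv_pow, inv_pow, hsqrt, div_eq_mul_inv, mul_inv]
        ring

/-- for `0 < a < T`, `x ∈ ℝ` and `α < −1/2`, the series
`∑_{n=0}^∞ (n+2)^α n! ∫_a^T (p_s(x) H_n(x/√s))² ds` converges. -/
theorem brownian_current_watanabe_norm_summable
    (a T x α : ℝ) (ha : 0 < a) (haT : a < T) (hα : α < -(1 / 2)) :
    Summable (fun n : ℕ => ((n : ℝ) + 2) ^ α * (n.factorial : ℝ) *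
      ∫ s in a..T, (gaussianKernel s x * hermiteH n (x / Real.sqrt s)) ^ 2) := by
  have hπ := Real.pi_pos
  have hg : Summable (fun n : ℕ => ((T - a)/(π * a)) * ((n:ℝ) + 1) ^ (α - 1/2)) := by
    refine Summable.mul_left _ ?_
    have hsum : Summable (fun n : ℕ => ((n:ℝ)) ^ (α - 1/2)) :=
      Real.summable_nat_rpow.mpr (by linarith)
    have := (summable_nat_add_iff 1).mpr hsum
    exact this.congr (fun n => by push_cast; ring_nf)
  refine Summable.of_nonneg_of_le (fun n => ?_) (fun n => ?_) hg
  · have h1 : (0:ℝ) ≤ ((n : ℝ) + 2) ^ α := Real.rpow_nonneg (by positivity) _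
    have h2 : (0:ℝ) ≤ (n.factorial : ℝ) := Nat.cast_nonneg _
    have h3 : (0:ℝ) ≤ ∫ s in a..T, (gaussianKernel s x * hermiteH n (x / Real.sqrt s)) ^ 2 :=
      intervalIntegral.integral_nonneg haT.le (fun s _ => sq_nonneg _)
    positivity
  · -- pointwise bound
    have hfac : (0:ℝ) < (n.factorial : ℝ) := by exact_mod_cast n.factorial_pos
    have hn1 : (0:ℝ) < (n:ℝ) + 1 := by positivity
    have hsq1 : (0:ℝ) < Real.sqrt ((n:ℝ)+1) := Real.sqrt_pos.mpr hn1
    -- continuity / integrability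
    have hDc : Continuous (iteratedDeriv n (fun y : ℝ => Real.exp (-y ^ 2 / 2))) :=
      gauss_contDiff.continuous_iteratedDeriv n (by exact le_top)
    have hHc : Continuous (hermiteH n) := by
      unfold hermiteH
      exact (continuous_const.mul (((continuous_id.pow 2).div_const 2).rexp)).mul hDc
    have hcont : ContinuousOn
        (fun s : ℝ => (gaussianKernel s x * hermiteH n (x / Real.sqrt s)) ^ 2) (Icc a T) := by
      have hs0 : ∀ s ∈ Icc a T, Real.sqrt (2 * π * s) ≠ 0 := by
        intro s hs
        have : (0:ℝ) < s := lt_of_lt_of_le ha hs.1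
        positivity
      have hsne : ∀ s ∈ Icc a T, Real.sqrt s ≠ 0 := by
        intro s hs
        have : (0:ℝ) < s := lt_of_lt_of_le ha hs.1
        positivity
      have h2sne : ∀ s ∈ Icc a T, (2:ℝ) * s ≠ 0 := by
        intro s hs
        have : (0:ℝ) < s := lt_of_lt_of_le ha hs.1
        positivity
      have c1 : ContinuousOn (fun s : ℝ => (Real.sqrt (2 * π * s))⁻¹) (Icc a T) :=
        ((Real.continuous_sqrt.comp (continuous_const.mul continuous_id)).continuousOn).inv₀ hs0
      have c2 : ContinuousOn (fun s : ℝ => Real.exp (-x ^ 2 / (2 * s))) (Icc a T) :=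
        (continuousOn_const.div ((continuous_const.mul continuous_id).continuousOn) h2sne).rexp
      have c3 : ContinuousOn (fun s : ℝ => x / Real.sqrt s) (Icc a T) :=
        continuousOn_const.div (Real.continuous_sqrt.continuousOn) hsne
      have : ContinuousOn (fun s : ℝ => gaussianKernel s x * hermiteH n (x / Real.sqrt s))
          (Icc a T) := by
        simp only [gaussianKernel]
        exact (c1.mul c2).mul (hHc.comp_continuousOn c3)
      exact this.pow 2
    have hInt : IntervalIntegrable
        (fun s : ℝ => (gaussianKernel s x * hermiteH n (x / Real.sqrt s)) ^ 2) volume a T := by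
      apply ContinuousOn.intervalIntegrable
      rwa [Set.uIcc_of_le haT.le]
    -- integral bound
    set c : ℝ := Bconst n ^ 2 / ((n.factorial : ℝ) ^ 2 * (2 * π * a)) with hc
    have hIbound : (∫ s in a..T, (gaussianKernel s x * hermiteH n (x / Real.sqrt s)) ^ 2)
        ≤ (T - a) * c := by
      have hmono : ∀ s ∈ Icc a T,
          (gaussianKernel s x * hermiteH n (x / Real.sqrt s)) ^ 2 ≤ c := by
        intro s hs
        have hspos : (0:ℝ) < s := lt_of_lt_of_le ha hs.1
        refine (prod_bound n hspos x).trans ?_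
        rw [hc]
        apply div_le_div_of_nonneg_left (sq_nonneg _) (by positivity)
        have : (2:ℝ) * π * a ≤ 2 * π * s := by nlinarith [hs.1]
        nlinarith [hfac, this, sq_nonneg ((n.factorial : ℝ))]
      calc (∫ s in a..T, (gaussianKernel s x * hermiteH n (x / Real.sqrt s)) ^ 2)
          ≤ ∫ _ in a..T, c :=
            intervalIntegral.integral_mono_on haT.le hInt intervalIntegrable_const hmono
        _ = (T - a) * c := by rw [intervalIntegral.integral_const, smul_eq_mul]
    -- Bconst bound
    have hBfac : Bconst n ^ 2 / (n.factorial : ℝ) ≤ 2 / Real.sqrt ((n:ℝ)+1) := by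
      rw [Bconst_sq, div_le_iff₀ hfac]
      exact gamma_key_bound n
    -- assemble
    have hrpow2 : ((n:ℝ) + 2) ^ α ≤ ((n:ℝ) + 1) ^ α :=
      Real.rpow_le_rpow_of_nonpos hn1 (by linarith) (by linarith)
    have hstep : ((n : ℝ) + 2) ^ α * (n.factorial : ℝ) *
        (∫ s in a..T, (gaussianKernel s x * hermiteH n (x / Real.sqrt s)) ^ 2)
        ≤ ((n : ℝ) + 2) ^ α * (n.factorial : ℝ) * ((T - a) * c) := by
      refine mul_le_mul_of_nonneg_left hIbound ?_
      have h1 : (0:ℝ) ≤ ((n : ℝ) + 2) ^ α := Real.rpow_nonneg (by positivity) _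
      positivity
    refine hstep.trans ?_
    have heq : ((n : ℝ) + 2) ^ α * (n.factorial : ℝ) * ((T - a) * c)
        = ((T - a)/(2 * π * a)) * (((n : ℝ) + 2) ^ α * (Bconst n ^ 2 / (n.factorial : ℝ))) := by
      rw [hc]
      field_simp
    rw [heq]
    have hchain : ((T - a)/(2 * π * a)) * (((n : ℝ) + 2) ^ α * (Bconst n ^ 2 / (n.factorial : ℝ)))
        ≤ ((T - a)/(2 * π * a)) * (((n : ℝ) + 1) ^ α * (2 / Real.sqrt ((n:ℝ)+1))) := by
      refine mul_le_mul_of_nonneg_left ?_ (div_nonneg (by linarith) (by positivity))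
      refine mul_le_mul hrpow2 hBfac ?_ (Real.rpow_nonneg (by positivity) _)
      positivity
    refine hchain.trans (le_of_eq ?_)
    have hsqrt_rpow : Real.sqrt ((n:ℝ)+1) = ((n:ℝ)+1) ^ (1/2 : ℝ) := Real.sqrt_eq_rpow _
    rw [hsqrt_rpow, show α - 1/2 = α + (-(1/2)) by ring, Real.rpow_add hn1,
      Real.rpow_neg hn1.le]
    field_simp
end main
end

section
/- Let H ∈ (1/2,1), T > 0 and r > 1/(2H) − 1/2. Then ∫_ℝ ∫_0^T ∫_0^T (1+x²)^{−r} e^{−x²|u−v|^{2H}/2} |u−v|^{2H−2} du dv dx < ∞. (This is the finiteness of the diagonal term A in the proof that the fractional Brownian current x ↦ ∫_0^T δ(x−B^H_s) dB^H_s belongs to H^{−r}(ℝ;ℝ).) -/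
open MeasureTheory Real
open scoped ENNReal

namespace FbmAux

/-- `exp (-(t/2)) ≤ 2 t^{-e}` for `t > 0` and `0 < e ≤ 1`. -/
lemma exp_neg_half_le {t e : ℝ} (ht : 0 < t) (he0 : 0 < e) (he1 : e ≤ 1) :
    Real.exp (-(t / 2)) ≤ 2 * t ^ (-e) := by
  rcases le_or_gt t 1 with h | h
  · have h1 : (1 : ℝ) ≤ t ^ (-e) :=
      Real.one_le_rpow_of_pos_of_le_one_of_nonpos ht h (by linarith)
    have h2 : Real.exp (-(t / 2)) ≤ 1 := Real.exp_le_one_iff.2 (by linarith)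
    linarith
  · have ht2 : t / 2 ≤ Real.exp (t / 2) := by
      have := Real.add_one_le_exp (t / 2); linarith
    have h3 : Real.exp (-(t / 2)) ≤ (t / 2)⁻¹ := by
      rw [Real.exp_neg]
      exact inv_anti₀ (by linarith) ht2
    have h4 : (t / 2)⁻¹ = 2 * t ^ (-1 : ℝ) := by
      rw [Real.rpow_neg_one]
      field_simp
    have h5 : t ^ (-1 : ℝ) ≤ t ^ (-e) :=
      Real.rpow_le_rpow_of_exponent_le h.le (by linarith)
    calc Real.exp (-(t / 2)) ≤ (t / 2)⁻¹ := h3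
      _ = 2 * t ^ (-1 : ℝ) := h4
      _ ≤ 2 * t ^ (-e) := by linarith

/-- `(x²)^{-e} = |x|^{-2e}`. -/
lemma sq_rpow_neg (x e : ℝ) : (x ^ 2) ^ (-e) = |x| ^ (-(2 * e)) := by
  rw [← sq_abs x, ← Real.rpow_natCast |x| 2, ← Real.rpow_mul (abs_nonneg x)]
  norm_num

/-- Integrability of `|w|^p` on `[-c, c]` for `p > -1`. -/
lemma integrableOn_abs_rpow {p : ℝ} (hp : -1 < p) {c : ℝ} (hc : 0 ≤ c) :
    IntegrableOn (fun w : ℝ => |w| ^ p) (Set.Icc (-c) c) := by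
  have h1 : IntegrableOn (fun w : ℝ => w ^ p) (Set.Ioc 0 c) := by
    have := intervalIntegral.intervalIntegrable_rpow' (a := 0) (b := c) hp
    rwa [intervalIntegrable_iff_integrableOn_Ioc_of_le hc] at this
  have h2 : IntegrableOn (fun w : ℝ => |w| ^ p) (Set.Ioc 0 c) :=
    h1.congr_fun (fun x hx => by rw [abs_of_pos hx.1]) measurableSet_Ioc
  have h3 : IntegrableOn (fun w : ℝ => |w| ^ p) (Set.Icc 0 c) := by
    rwa [integrableOn_Icc_iff_integrableOn_Ioc]
  have h5 : Integrable ((Set.Icc (0 : ℝ) c).indicator fun w => |w| ^ p) :=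
    (integrable_indicator_iff measurableSet_Icc).2 h3
  have h6 := h5.comp_neg
  have hmem : ∀ x : ℝ, -x ∈ Set.Icc (0 : ℝ) c ↔ x ∈ Set.Icc (-c) (0 : ℝ) := by
    intro x
    simp only [Set.mem_Icc]
    constructor <;> rintro ⟨h₁, h₂⟩ <;> constructor <;> linarith
  have h7 : (fun x : ℝ => (Set.Icc (0 : ℝ) c).indicator (fun w => |w| ^ p) (-x))
      = (Set.Icc (-c) (0 : ℝ)).indicator fun w => |w| ^ p := by
    funext x
    simp only [Set.indicator_apply, hmem x, abs_neg]
  rw [h7] at h6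
  have h4 : IntegrableOn (fun w : ℝ => |w| ^ p) (Set.Icc (-c) 0) :=
    (integrable_indicator_iff measurableSet_Icc).1 h6
  have h8 := h4.union h3
  rwa [Set.Icc_union_Icc_eq_Icc (by linarith) hc] at h8

end FbmAux

open FbmAux

set_option maxHeartbeats 1000000

/-- for `H ∈ (1/2,1)`, `T > 0` and `r > 1/(2H) − 1/2`,
`∫_ℝ ∫_0^T ∫_0^T (1+x²)^{−r} e^{−x²|u−v|^{2H}/2} |u−v|^{2H−2} du dv dx < ∞`. -/
theorem fbm_current_sobolev_diagonal_term_finite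
    (H T r : ℝ) (hH : 1 / 2 < H) (hH1 : H < 1) (hT : 0 < T)
    (hr : 1 / (2 * H) - 1 / 2 < r) :
    ∫⁻ x : ℝ, ∫⁻ u in Set.Icc (0 : ℝ) T, ∫⁻ v in Set.Icc (0 : ℝ) T,
      ENNReal.ofReal ((1 + x ^ 2) ^ (-r) *
        Real.exp (-(x ^ 2 * |u - v| ^ (2 * H)) / 2) * |u - v| ^ (2 * H - 2))
    < ⊤ := by
  have h2H : (0 : ℝ) < 2 * H := by linarith
  have hr0 : 0 < r := by
    have h12 : (1 : ℝ) / 2 < 1 / (2 * H) := by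
      rw [div_lt_div_iff₀ two_pos h2H]; linarith
    linarith
  -- choice of ε
  set ε : ℝ := (max (1 / 2 - r) 0 + (2 * H - 1) / (2 * H)) / 2 with hεdef
  have hfrac_pos : 0 < (2 * H - 1) / (2 * H) := div_pos (by linarith) h2H
  have hfrac_half : (2 * H - 1) / (2 * H) < 1 / 2 := by
    rw [div_lt_div_iff₀ h2H two_pos]; linarith
  have hB : 1 / 2 - r < (2 * H - 1) / (2 * H) := by
    have hfe : (2 * H - 1) / (2 * H) = 1 - 1 / (2 * H) := by field_simp
    rw [hfe]; linarith
  have hε0 : 0 < ε := by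
    have := le_max_right (1 / 2 - r) 0
    rw [hεdef]; linarith
  have hεA : 1 / 2 - r < ε := by
    have := le_max_left (1 / 2 - r) 0
    rw [hεdef]; linarith
  have hεB : ε < (2 * H - 1) / (2 * H) := by
    have := max_lt hB hfrac_pos
    rw [hεdef]; linarith
  have hε_half : ε < 1 / 2 := hεB.trans hfrac_half
  set q : ℝ := 2 * H - 2 - 2 * H * ε with hqdef
  have hq : -1 < q := by
    have h1 : ε * (2 * H) < 2 * H - 1 := (lt_div_iff₀ h2H).1 hεB
    rw [hqdef]; nlinarith
  have ha1 : 1 < 2 * r + 2 * ε := by linarith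
  set a : ℝ := 2 * r + 2 * ε with hadef
  -- the dominating function in x
  set cx : ℝ → ℝ := fun x => 2 * (1 + x ^ 2) ^ (-r) * |x| ^ (-(2 * ε)) with hcxdef
  have hcx_nonneg : ∀ x, 0 ≤ cx x := fun x => by
    simp only [hcxdef]; positivity
  -- pointwise bound
  have ptbound : ∀ x : ℝ, x ≠ 0 → ∀ s : ℝ, 0 ≤ s →
      (1 + x ^ 2) ^ (-r) * Real.exp (-(x ^ 2 * s ^ (2 * H)) / 2) * s ^ (2 * H - 2)
        ≤ cx x * s ^ q := by
    intro x hx s hs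
    have hx2 : 0 < x ^ 2 := lt_of_le_of_ne (sq_nonneg x) (Ne.symm (pow_ne_zero 2 hx))
    rcases hs.lt_or_eq with hs' | hs'
    · -- s > 0
      have hsp : 0 < s ^ (2 * H) := Real.rpow_pos_of_pos hs' _
      have htpos : 0 < x ^ 2 * s ^ (2 * H) := mul_pos hx2 hsp
      have hexp : Real.exp (-(x ^ 2 * s ^ (2 * H)) / 2)
          ≤ 2 * (x ^ 2 * s ^ (2 * H)) ^ (-ε) := by
        rw [neg_div]
        exact exp_neg_half_le htpos hε0 (by linarith)
      have hA0 : (0 : ℝ) ≤ (1 + x ^ 2) ^ (-r) := Real.rpow_nonneg (by positivity) _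
      have hS0 : (0 : ℝ) ≤ s ^ (2 * H - 2) := Real.rpow_nonneg hs _
      have e1 : (x ^ 2 * s ^ (2 * H)) ^ (-ε)
          = |x| ^ (-(2 * ε)) * s ^ (-(2 * H * ε)) := by
        rw [Real.mul_rpow (le_of_lt hx2) (le_of_lt hsp), sq_rpow_neg,
          ← Real.rpow_mul hs]
        ring_nf
      have e2 : s ^ (-(2 * H * ε)) * s ^ (2 * H - 2) = s ^ q := by
        rw [← Real.rpow_add hs', hqdef]
        ring_nf
      calc (1 + x ^ 2) ^ (-r) * Real.exp (-(x ^ 2 * s ^ (2 * H)) / 2) * s ^ (2 * H - 2)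
          ≤ (1 + x ^ 2) ^ (-r) * (2 * (x ^ 2 * s ^ (2 * H)) ^ (-ε)) * s ^ (2 * H - 2) := by
            apply mul_le_mul_of_nonneg_right _ hS0
            exact mul_le_mul_of_nonneg_left hexp hA0
        _ = cx x * (s ^ (-(2 * H * ε)) * s ^ (2 * H - 2)) := by
            simp only [e1, hcxdef]; ring
        _ = cx x * s ^ q := by rw [e2]
    · -- s = 0
      have hq0 : q < 0 := by
        have := mul_pos h2H hε0
        rw [hqdef]; nlinarith
      rw [← hs', Real.zero_rpow (ne_of_lt (by linarith : (2 * H - 2 : ℝ) < 0)),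
        Real.zero_rpow (ne_of_lt hq0)]
      simp
  -- bound for cx on |x| ≥ 1
  have cx_far : ∀ x : ℝ, 1 ≤ |x| → cx x ≤ 2 * |x| ^ (-a) := by
    intro x hx
    have hx0 : x ≠ 0 := by intro h; rw [h] at hx; simp at hx; linarith
    have hx2 : 0 < x ^ 2 := lt_of_le_of_ne (sq_nonneg x) (Ne.symm (pow_ne_zero 2 hx0))
    have h1 : (1 + x ^ 2) ^ (-r) ≤ (x ^ 2) ^ (-r) :=
      Real.rpow_le_rpow_of_nonpos hx2 (by linarith) (by linarith)
    have h2 : (x ^ 2) ^ (-r) = |x| ^ (-(2 * r)) := sq_rpow_neg x r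
    have h3 : |x| ^ (-(2 * r)) * |x| ^ (-(2 * ε)) = |x| ^ (-a) := by
      rw [← Real.rpow_add (by linarith : (0:ℝ) < |x|), hadef]
      ring_nf
    have hX0 : (0 : ℝ) ≤ |x| ^ (-(2 * ε)) := Real.rpow_nonneg (abs_nonneg x) _
    calc cx x = 2 * (1 + x ^ 2) ^ (-r) * |x| ^ (-(2 * ε)) := by simp only [hcxdef]
      _ ≤ 2 * (x ^ 2) ^ (-r) * |x| ^ (-(2 * ε)) := by
          have h4 := mul_le_mul_of_nonneg_right h1 hX0
          linarith
      _ = 2 * (|x| ^ (-(2 * r)) * |x| ^ (-(2 * ε))) := by rw [h2]; ring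
      _ = 2 * |x| ^ (-a) := by rw [h3]
  -- finiteness of ∫ cx
  have hA : (∫⁻ x : ℝ, ENNReal.ofReal (cx x)) < ⊤ := by
    rw [← lintegral_add_compl (fun x => ENNReal.ofReal (cx x))
      (measurableSet_Icc (a := (-1 : ℝ)) (b := 1))]
    apply ENNReal.add_lt_top.2
    constructor
    · -- near zero
      have hb1 : IntegrableOn (fun x : ℝ => 2 * |x| ^ (-(2 * ε))) (Set.Icc (-1) 1) :=
        (integrableOn_abs_rpow (by linarith) zero_le_one).const_mul 2
      refine lt_of_le_of_lt (lintegral_mono fun x => ?_) hb1.lintegral_lt_top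
      apply ENNReal.ofReal_le_ofReal
      have h1 : (1 + x ^ 2) ^ (-r) ≤ 1 :=
        Real.rpow_le_one_of_one_le_of_nonpos (by nlinarith [sq_nonneg x]) (by linarith)
      have hX0 : (0 : ℝ) ≤ |x| ^ (-(2 * ε)) := Real.rpow_nonneg (abs_nonneg x) _
      simp only [hcxdef]
      have h2 := mul_le_mul_of_nonneg_right h1 hX0
      linarith
    · -- far from zero
      have hcompl : (Set.Icc (-1 : ℝ) 1)ᶜ = Set.Iio (-1) ∪ Set.Ioi 1 := by
        ext x
        simp only [Set.mem_compl_iff, Set.mem_Icc, Set.mem_union, Set.mem_Iio, Set.mem_Ioi,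
          not_and_or, not_le]
      have hdisj : Disjoint (Set.Iio (-1 : ℝ)) (Set.Ioi 1) := by
        apply Set.disjoint_left.2
        intro x hx hx'
        simp only [Set.mem_Iio, Set.mem_Ioi] at hx hx'
        linarith
      rw [hcompl, lintegral_union measurableSet_Ioi hdisj]
      have hIoi : (∫⁻ x in Set.Ioi (1 : ℝ), ENNReal.ofReal (cx x)) < ⊤ := by
        have hb2 : IntegrableOn (fun x : ℝ => 2 * |x| ^ (-a)) (Set.Ioi 1) := by
          have h9 : IntegrableOn (fun x : ℝ => 2 * x ^ (-a)) (Set.Ioi 1) :=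
            (integrableOn_Ioi_rpow_of_lt (by linarith : -a < -1) one_pos).const_mul 2
          exact h9.congr_fun (fun x hx => by
            rw [abs_of_pos (lt_trans one_pos hx)]) measurableSet_Ioi
        refine lt_of_le_of_lt (setLIntegral_mono' measurableSet_Ioi fun x hx => ?_)
          hb2.lintegral_lt_top
        exact ENNReal.ofReal_le_ofReal (cx_far x (by
          rw [abs_of_pos (lt_trans one_pos hx)]; exact le_of_lt hx))
      have hIio : (∫⁻ x in Set.Iio (-1 : ℝ), ENNReal.ofReal (cx x))
          = ∫⁻ x in Set.Ioi (1 : ℝ), ENNReal.ofReal (cx (-x)) := by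
        rw [← lintegral_indicator (measurableSet_Iio) _,
          ← lintegral_indicator (measurableSet_Ioi) _]
        have := (Measure.measurePreserving_neg (volume : Measure ℝ)).lintegral_comp_emb
          (MeasurableEquiv.neg ℝ).measurableEmbedding
          ((Set.Ioi (1 : ℝ)).indicator fun x => ENNReal.ofReal (cx (-x)))
        rw [← this]
        apply lintegral_congr
        intro x
        simp only [Set.indicator_apply, MeasurableEquiv.neg_apply, neg_neg,
          Set.mem_Ioi, Set.mem_Iio]
        have hiff : 1 < -x ↔ x < -1 := by constructor <;> intro <;> linarith
        simp only [hiff]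
      rw [hIio]
      have hIoi2 : (∫⁻ x in Set.Ioi (1 : ℝ), ENNReal.ofReal (cx (-x))) < ⊤ := by
        have : ∀ x : ℝ, cx (-x) = cx x := by
          intro x; simp only [hcxdef]; rw [neg_pow]; simp [abs_neg]
        simp only [this]
        exact hIoi
      exact ENNReal.add_lt_top.2 ⟨hIoi2, hIoi⟩
  -- finiteness of the (u,v) integral
  set K : ℝ≥0∞ := ∫⁻ u in Set.Icc (0 : ℝ) T, ∫⁻ v in Set.Icc (0 : ℝ) T,
      ENNReal.ofReal (|u - v| ^ q) with hKdef
  have hbase : IntegrableOn (fun w : ℝ => |w| ^ q) (Set.Icc (-T) T) :=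
    integrableOn_abs_rpow hq hT.le
  set K0 : ℝ≥0∞ := ∫⁻ w in Set.Icc (-T) T, ENNReal.ofReal (|w| ^ q) with hK0def
  have hK0 : K0 < ⊤ := hbase.lintegral_lt_top
  have hKu : ∀ u ∈ Set.Icc (0 : ℝ) T,
      (∫⁻ v in Set.Icc (0 : ℝ) T, ENNReal.ofReal (|u - v| ^ q)) ≤ K0 := by
    intro u hu
    rw [← lintegral_indicator measurableSet_Icc]
    set F : ℝ → ℝ≥0∞ := (Set.Icc (-T) T).indicator fun w => ENNReal.ofReal (|w| ^ q)
      with hFdef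
    have hb : ∀ v : ℝ, (Set.Icc (0 : ℝ) T).indicator
        (fun v => ENNReal.ofReal (|u - v| ^ q)) v ≤ F (v + -u) := by
      intro v
      by_cases hv : v ∈ Set.Icc (0 : ℝ) T
      · rw [Set.indicator_of_mem hv, hFdef]
        have hmem : v + -u ∈ Set.Icc (-T) T := by
          simp only [Set.mem_Icc] at hv hu ⊢
          constructor <;> linarith
        rw [Set.indicator_of_mem hmem]
        apply le_of_eq
        congr 1
        rw [show v + -u = v - u by ring, abs_sub_comm]
      · rw [Set.indicator_of_notMem hv]
        exact zero_le
    calc (∫⁻ v, (Set.Icc (0 : ℝ) T).indicator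
          (fun v => ENNReal.ofReal (|u - v| ^ q)) v)
        ≤ ∫⁻ v, F (v + -u) := lintegral_mono hb
      _ = ∫⁻ w, F w := lintegral_add_right_eq_self F (-u)
      _ = K0 := by rw [hFdef, lintegral_indicator measurableSet_Icc, hK0def]
  have hK : K < ⊤ := by
    have h1 : K ≤ K0 * volume (Set.Icc (0 : ℝ) T) := by
      rw [hKdef, ← setLIntegral_const]
      exact setLIntegral_mono' measurableSet_Icc hKu
    refine lt_of_le_of_lt h1 (ENNReal.mul_lt_top hK0 ?_)
    rw [Real.volume_Icc]
    exact ENNReal.ofReal_lt_top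
  -- main bound
  have h0 : ∀ᵐ x : ℝ, x ≠ (0 : ℝ) := by
    have hset : {x : ℝ | ¬ x ≠ 0} = {0} := by ext; simp
    rw [ae_iff, hset]
    exact measure_singleton 0
  have main : ∀ x : ℝ, x ≠ 0 →
      (∫⁻ u in Set.Icc (0 : ℝ) T, ∫⁻ v in Set.Icc (0 : ℝ) T,
        ENNReal.ofReal ((1 + x ^ 2) ^ (-r) *
          Real.exp (-(x ^ 2 * |u - v| ^ (2 * H)) / 2) * |u - v| ^ (2 * H - 2)))
      ≤ ENNReal.ofReal (cx x) * K := by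
    intro x hx
    calc (∫⁻ u in Set.Icc (0 : ℝ) T, ∫⁻ v in Set.Icc (0 : ℝ) T,
          ENNReal.ofReal ((1 + x ^ 2) ^ (-r) *
            Real.exp (-(x ^ 2 * |u - v| ^ (2 * H)) / 2) * |u - v| ^ (2 * H - 2)))
        ≤ ∫⁻ u in Set.Icc (0 : ℝ) T, ∫⁻ v in Set.Icc (0 : ℝ) T,
            ENNReal.ofReal (cx x) * ENNReal.ofReal (|u - v| ^ q) := by
          refine lintegral_mono fun u => lintegral_mono fun v => ?_
          rw [← ENNReal.ofReal_mul (hcx_nonneg x)]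
          exact ENNReal.ofReal_le_ofReal (ptbound x hx |u - v| (abs_nonneg _))
      _ = ENNReal.ofReal (cx x) * K := by
          rw [lintegral_congr fun u =>
            lintegral_const_mul' _ _ ENNReal.ofReal_ne_top,
            lintegral_const_mul' _ _ ENNReal.ofReal_ne_top, hKdef]
  calc (∫⁻ x : ℝ, ∫⁻ u in Set.Icc (0 : ℝ) T, ∫⁻ v in Set.Icc (0 : ℝ) T,
        ENNReal.ofReal ((1 + x ^ 2) ^ (-r) *
          Real.exp (-(x ^ 2 * |u - v| ^ (2 * H)) / 2) * |u - v| ^ (2 * H - 2)))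
      ≤ ∫⁻ x : ℝ, ENNReal.ofReal (cx x) * K := by
        refine lintegral_mono_ae ?_
        filter_upwards [h0] with x hx
        exact main x hx
    _ = (∫⁻ x : ℝ, ENNReal.ofReal (cx x)) * K :=
        lintegral_mul_const' K _ hK.ne
    _ < ⊤ := ENNReal.mul_lt_top hA hK
end

section
/- Let H ∈ (1/2,1), T > 0 and r > 3/2 − 1/(2H). Then ∫_ℝ (1+x²)^{−r} x² ( ∫_0^T ∫_0^T ( ∫_0^{u_1} |u_2−v_2|^{2H−2} du_2 ) ( ∫_0^{v_2} |u_1−v_1|^{2H−2} dv_1 ) e^{−x²|u_1−v_2|^{2H}/2} du_1 dv_2 ) dx < ∞. (This is the finiteness of the off-diagonal term B arising in the chaos-norm computation for the fractional Brownian current in the space H^{−r}(ℝ;ℝ).) -/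
open MeasureTheory Real Set ENNReal NNReal

lemma fbm_aux_intInt_abs_rpow {s : ℝ} (hs : -1 < s) (c d : ℝ) :
    IntervalIntegrable (fun x : ℝ => |x| ^ s) volume c d := by
  have base : ∀ c : ℝ, 0 ≤ c → IntervalIntegrable (fun x : ℝ => |x| ^ s) volume 0 c := by
    intro c hc
    have h1 : IntervalIntegrable (fun x : ℝ => x ^ s) volume 0 c := intervalIntegral.intervalIntegrable_rpow' hs
    rw [intervalIntegrable_iff] at h1 ⊢
    refine h1.congr_fun (fun x hx => ?_) measurableSet_uIoc
    rw [Set.uIoc_of_le hc] at hx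
    rw [abs_of_pos hx.1]
  have all : ∀ c : ℝ, IntervalIntegrable (fun x : ℝ => |x| ^ s) volume 0 c := by
    intro c
    rcases le_total 0 c with hc | hc
    · exact base c hc
    · rw [IntervalIntegrable.iff_comp_neg, neg_zero]
      simpa [abs_neg] using base (-c) (by linarith)
  exact ((all c).symm.trans (all d))

lemma fbm_aux_kernel_bound {T a : ℝ} (hT : 0 < T) (ha : 0 < a) (ha1 : a < 1)
    {u v : ℝ} (hu : u ∈ Icc (0:ℝ) T) (hv : v ∈ Icc (0:ℝ) T) :
    ∫ t in (0:ℝ)..u, |t - v| ^ (a - 1) ≤ 2 * T ^ a / a := by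
  have hs : (-1:ℝ) < a - 1 := by linarith
  have h1 : (∫ t in (0:ℝ)..u, |t - v| ^ (a-1)) = ∫ w in (-v)..(u - v), |w| ^ (a-1) := by
    have := intervalIntegral.integral_comp_sub_right (a := (0:ℝ)) (b := u)
      (fun w => |w| ^ (a-1)) v
    simpa using this
  rw [h1]
  have h2 : (∫ w in (-v)..(u-v), |w| ^ (a-1)) ≤ ∫ w in (-T)..T, |w| ^ (a-1) := by
    apply intervalIntegral.integral_mono_interval (by linarith [hv.2]) (by linarith [hu.1])
      (by linarith [hu.2, hv.1])
      (Filter.Eventually.of_forall fun w => rpow_nonneg (abs_nonneg w) _)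
      (fbm_aux_intInt_abs_rpow hs _ _)
  refine h2.trans ?_
  have h4 : (∫ w in (0:ℝ)..T, |w| ^ (a-1)) = T ^ a / a := by
    have e1 : (∫ w in (0:ℝ)..T, |w| ^ (a-1)) = ∫ w in (0:ℝ)..T, w ^ (a-1) := by
      apply intervalIntegral.integral_congr
      intro w hw
      rw [Set.uIcc_of_le hT.le] at hw
      show |w| ^ (a-1) = w ^ (a-1)
      rw [abs_of_nonneg hw.1]
    rw [e1, integral_rpow (Or.inl hs)]
    have e2 : a - 1 + 1 = a := by ring
    rw [e2, Real.zero_rpow ha.ne']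
    ring
  have h3 : (∫ w in (-T)..(0:ℝ), |w| ^ (a-1)) = ∫ w in (0:ℝ)..T, |w| ^ (a-1) := by
    have := intervalIntegral.integral_comp_neg (a := (0:ℝ)) (b := T) (fun w => |w| ^ (a-1))
    simpa [abs_neg] using this.symm
  have h5 : (∫ w in (-T)..T, |w| ^ (a-1)) = 2 * (T ^ a / a) := by
    rw [← intervalIntegral.integral_add_adjacent_intervals (b := (0:ℝ))
      (fbm_aux_intInt_abs_rpow hs _ _) (fbm_aux_intInt_abs_rpow hs _ _), h3, h4]
    ring
  rw [h5]; apply le_of_eq; ring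

lemma fbm_aux_exp_le_rpow {p y : ℝ} (hp : 0 < p) (hy : 0 < y) :
    Real.exp (-y) ≤ p ^ p * y ^ (-p) := by
  have hyp : 0 < y / p := div_pos hy hp
  have h1 : Real.exp (-(y/p)) ≤ p / y := by
    rw [Real.exp_neg]
    have h2 : y / p ≤ Real.exp (y / p) := by
      have := Real.add_one_le_exp (y / p); linarith
    calc (Real.exp (y/p))⁻¹ ≤ (y/p)⁻¹ := by
          apply inv_anti₀ hyp h2
      _ = p / y := by rw [inv_div]
  have h2 : Real.exp (-y) = (Real.exp (-(y/p))) ^ p := by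
    rw [← Real.exp_mul]
    congr 1
    field_simp
  rw [h2]
  calc (Real.exp (-(y/p))) ^ p ≤ (p / y) ^ p :=
        Real.rpow_le_rpow (Real.exp_pos _).le h1 hp.le
    _ = p ^ p * y ^ (-p) := by
        rw [Real.div_rpow hp.le hy.le, Real.rpow_neg hy.le, div_eq_mul_inv]

lemma fbm_aux_tail_finite {β : ℝ} (hβ : 1 < β) :
    ∫⁻ x in (Icc (-1:ℝ) 1)ᶜ, ENNReal.ofReal (|x| ^ (-β)) < ⊤ := by
  have hIoi : ∫⁻ x in Ioi (1:ℝ), ENNReal.ofReal (|x| ^ (-β)) < ⊤ := by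
    have hint : IntegrableOn (fun x : ℝ => x ^ (-β)) (Ioi 1) :=
      integrableOn_Ioi_rpow_of_lt (by linarith) one_pos
    have heq : ∫⁻ x in Ioi (1:ℝ), ENNReal.ofReal (|x| ^ (-β))
        = ∫⁻ x in Ioi (1:ℝ), ENNReal.ofReal (x ^ (-β)) := by
      apply setLIntegral_congr_fun measurableSet_Ioi
      exact (fun x hx => by rw [abs_of_pos (lt_trans one_pos hx)])
    rw [heq]
    calc ∫⁻ x in Ioi (1:ℝ), ENNReal.ofReal (x ^ (-β))
        ≤ ∫⁻ x in Ioi (1:ℝ), ‖x ^ (-β)‖ₑ := lintegral_ofReal_le_lintegral_enorm _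
      _ < ⊤ := hint.2
  have hIio : ∫⁻ x in Iio (-1:ℝ), ENNReal.ofReal (|x| ^ (-β)) < ⊤ := by
    have h := (Measure.measurePreserving_neg (volume : Measure ℝ)).setLIntegral_comp_preimage_emb
      (MeasurableEquiv.neg ℝ).measurableEmbedding
      (fun x => ENNReal.ofReal (|x| ^ (-β))) (Ioi (1:ℝ))
    have hpre : (Neg.neg ⁻¹' (Ioi (1:ℝ))) = Iio (-1:ℝ) := by
      ext x; simp [lt_neg]
    rw [hpre] at h
    have h2 : ∫⁻ x in Iio (-1:ℝ), ENNReal.ofReal (|x| ^ (-β))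
        = ∫⁻ x in Ioi (1:ℝ), ENNReal.ofReal (|x| ^ (-β)) := by
      rw [← h]
      apply setLIntegral_congr_fun measurableSet_Iio
      exact (fun x _ => by rw [abs_neg])
    rw [h2]; exact hIoi
  calc ∫⁻ x in (Icc (-1:ℝ) 1)ᶜ, ENNReal.ofReal (|x| ^ (-β))
      ≤ ∫⁻ x in (Iio (-1:ℝ) ∪ Ioi 1), ENNReal.ofReal (|x| ^ (-β)) := by
        apply lintegral_mono_set
        intro x hx
        simp only [mem_compl_iff, mem_Icc, not_and_or, not_le] at hx
        rcases hx with h | h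
        · exact Or.inl h
        · exact Or.inr h
    _ ≤ (∫⁻ x in Iio (-1:ℝ), ENNReal.ofReal (|x| ^ (-β)))
        + ∫⁻ x in Ioi (1:ℝ), ENNReal.ofReal (|x| ^ (-β)) := lintegral_union_le _ _ _
    _ < ⊤ := ENNReal.add_lt_top.mpr ⟨hIio, hIoi⟩

lemma fbm_aux_symm_finite {q T : ℝ} (hq1 : q < 1) (hT : 0 < T) :
    ∫⁻ w in Icc (-T) T, ENNReal.ofReal (|w| ^ (-q)) < ⊤ := by
  have hIcc : ∫⁻ w in Icc (0:ℝ) T, ENNReal.ofReal (|w| ^ (-q)) < ⊤ := by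
    have h1 : IntervalIntegrable (fun w : ℝ => |w| ^ (-q)) volume 0 T := by
      have : (-1:ℝ) < -q := by linarith
      exact (by
        have base : ∀ c : ℝ, 0 ≤ c → IntervalIntegrable (fun x : ℝ => |x| ^ (-q)) volume 0 c := by
          intro c hc
          have h1 : IntervalIntegrable (fun x : ℝ => x ^ (-q)) volume 0 c :=
            intervalIntegral.intervalIntegrable_rpow' this
          rw [intervalIntegrable_iff] at h1 ⊢
          refine h1.congr_fun (fun x hx => ?_) measurableSet_uIoc
          rw [Set.uIoc_of_le hc] at hx
          show x ^ (-q) = |x| ^ (-q)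
          rw [abs_of_pos hx.1]
        exact base T hT.le)
    have hint : IntegrableOn (fun w : ℝ => |w| ^ (-q)) (Icc 0 T) := by
      rw [intervalIntegrable_iff_integrableOn_Icc_of_le hT.le] at h1
      exact h1
    calc ∫⁻ w in Icc (0:ℝ) T, ENNReal.ofReal (|w| ^ (-q))
        ≤ ∫⁻ w in Icc (0:ℝ) T, ‖|w| ^ (-q)‖ₑ := lintegral_ofReal_le_lintegral_enorm _
      _ < ⊤ := hint.2
  have hneg : ∫⁻ w in Icc (-T) (0:ℝ), ENNReal.ofReal (|w| ^ (-q))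
      = ∫⁻ w in Icc (0:ℝ) T, ENNReal.ofReal (|w| ^ (-q)) := by
    have h := (Measure.measurePreserving_neg (volume : Measure ℝ)).setLIntegral_comp_preimage_emb
      (MeasurableEquiv.neg ℝ).measurableEmbedding
      (fun w => ENNReal.ofReal (|w| ^ (-q))) (Icc (0:ℝ) T)
    have hpre : (Neg.neg ⁻¹' (Icc (0:ℝ) T)) = Icc (-T) (0:ℝ) := by
      ext x
      simp only [mem_preimage, mem_Icc, neg_le, le_neg]
      constructor <;> intro hh <;> exact ⟨by linarith [hh.1, hh.2], by linarith [hh.1, hh.2]⟩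
    rw [hpre] at h
    rw [← h]
    apply setLIntegral_congr_fun measurableSet_Icc
    exact (fun x _ => by rw [abs_neg])
  calc ∫⁻ w in Icc (-T) T, ENNReal.ofReal (|w| ^ (-q))
      ≤ ∫⁻ w in (Icc (-T) (0:ℝ) ∪ Icc (0:ℝ) T), ENNReal.ofReal (|w| ^ (-q)) := by
        apply lintegral_mono_set
        intro x hx
        rcases le_total x 0 with h | h
        · exact Or.inl ⟨hx.1, h⟩
        · exact Or.inr ⟨h, hx.2⟩
    _ ≤ (∫⁻ w in Icc (-T) (0:ℝ), ENNReal.ofReal (|w| ^ (-q)))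
        + ∫⁻ w in Icc (0:ℝ) T, ENNReal.ofReal (|w| ^ (-q)) := lintegral_union_le _ _ _
    _ < ⊤ := by rw [hneg]; exact ENNReal.add_lt_top.mpr ⟨hIcc, hIcc⟩

lemma fbm_aux_inner_le {q T : ℝ} {u : ℝ} (hu : u ∈ Icc (0:ℝ) T) :
    ∫⁻ v in Icc (0:ℝ) T, ENNReal.ofReal (|u - v| ^ (-q))
      ≤ ∫⁻ w in Icc (-T) T, ENNReal.ofReal (|w| ^ (-q)) := by
  have key : ∫⁻ v in Icc (0:ℝ) T, ENNReal.ofReal (|u - v| ^ (-q))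
      = ∫⁻ w in Icc (-u) (T - u), ENNReal.ofReal (|w| ^ (-q)) := by
    have h := (measurePreserving_sub_right (volume : Measure ℝ) u).setLIntegral_comp_preimage_emb
      (MeasurableEquiv.subRight u).measurableEmbedding
      (fun w => ENNReal.ofReal (|w| ^ (-q))) (Icc (-u) (T - u))
    have hpre : ((· - u) ⁻¹' (Icc (-u) (T - u))) = Icc (0:ℝ) T := by
      ext v
      simp only [mem_preimage, mem_Icc]
      constructor <;> intro hh <;> exact ⟨by linarith [hh.1, hh.2], by linarith [hh.1, hh.2]⟩
    rw [hpre] at h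
    rw [← h]
    apply setLIntegral_congr_fun measurableSet_Icc
    exact (fun v _ => by rw [abs_sub_comm])
  rw [key]
  exact lintegral_mono_set (Icc_subset_Icc (by linarith [hu.2]) (by linarith [hu.1]))

lemma fbm_aux_prod5_le {p1 p2 A B E C : ℝ} (h1 : 0 ≤ p1) (h1' : p1 ≤ 1) (h2 : 0 ≤ p2)
    (h2' : p2 ≤ 1) (hA : 0 ≤ A) (hA' : A ≤ C) (hB : 0 ≤ B) (hB' : B ≤ C)
    (hE : 0 ≤ E) (hE' : E ≤ 1) : p1 * p2 * A * B * E ≤ C ^ 2 := by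
  have hC0 : 0 ≤ C := hA.trans hA'
  have k1 : p1 * p2 ≤ 1 := by nlinarith
  have k2 : p1 * p2 * A ≤ C := by
    calc p1 * p2 * A ≤ 1 * C := mul_le_mul k1 hA' hA zero_le_one
      _ = C := one_mul C
  have k3 : p1 * p2 * A * B ≤ C * C := mul_le_mul k2 hB' hB hC0
  have k4 : p1 * p2 * A * B * E ≤ C * C * 1 :=
    mul_le_mul k3 hE' hE (by nlinarith)
  calc p1 * p2 * A * B * E ≤ C * C * 1 := k4
    _ = C ^ 2 := by ring

lemma fbm_aux_pointwise {r p C A B x sH : ℝ} (hr0 : 0 < r) (hp0 : 0 < p)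
    (hx : 1 < |x|) (hsH : 0 < sH)
    (hA : 0 ≤ A) (hAC : A ≤ C) (hB : 0 ≤ B) (hBC : B ≤ C) :
    (1 + x ^ 2) ^ (-r) * x ^ 2 * A * B * Real.exp (-(x ^ 2 * sH) / 2)
      ≤ C ^ 2 * (p ^ p * 2 ^ p) * (|x| ^ (-(2 * r + 2 * p - 2)) * sH ^ (-p)) := by
  have hxpos : (0:ℝ) < |x| := lt_trans one_pos hx
  have hx0 : x ≠ 0 := by
    intro h; rw [h, abs_zero] at hx; linarith
  have hx2 : (0:ℝ) < x ^ 2 := by positivity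
  have hC0 : 0 ≤ C := hA.trans hAC
  have hy : 0 < x ^ 2 * sH / 2 := by positivity
  -- step 1 : replace A, B by C and exp by p^p y^{-p}
  have hexp : Real.exp (-(x ^ 2 * sH) / 2) ≤ p ^ p * (x ^ 2 * sH / 2) ^ (-p) := by
    have := fbm_aux_exp_le_rpow hp0 hy
    rwa [show -(x ^ 2 * sH / 2) = -(x ^ 2 * sH) / 2 by ring] at this
  have hP : (0:ℝ) ≤ (1 + x ^ 2) ^ (-r) * x ^ 2 := by positivity
  have step1 : (1 + x ^ 2) ^ (-r) * x ^ 2 * A * B * Real.exp (-(x ^ 2 * sH) / 2)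
      ≤ (1 + x ^ 2) ^ (-r) * x ^ 2 * C * C * (p ^ p * (x ^ 2 * sH / 2) ^ (-p)) := by
    have e1 : (1 + x ^ 2) ^ (-r) * x ^ 2 * A ≤ (1 + x ^ 2) ^ (-r) * x ^ 2 * C :=
      mul_le_mul_of_nonneg_left hAC hP
    have e2 : (1 + x ^ 2) ^ (-r) * x ^ 2 * A * B ≤ (1 + x ^ 2) ^ (-r) * x ^ 2 * C * C :=
      mul_le_mul e1 hBC hB (by positivity)
    exact mul_le_mul e2 hexp (Real.exp_pos _).le (by positivity)
  refine step1.trans ?_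
  -- step 2 : (1+x²)^{-r} ≤ (x²)^{-r}
  have hbase : (x ^ 2 : ℝ) ^ (-r) * x ^ 2 * C * C * (p ^ p * (x ^ 2 * sH / 2) ^ (-p))
      ≥ (1 + x ^ 2) ^ (-r) * x ^ 2 * C * C * (p ^ p * (x ^ 2 * sH / 2) ^ (-p)) := by
    have h1 : (1 + x ^ 2) ^ (-r) ≤ (x ^ 2 : ℝ) ^ (-r) :=
      Real.rpow_le_rpow_of_nonpos hx2 (by linarith) (neg_nonpos.mpr hr0.le)
    apply mul_le_mul_of_nonneg_right _
      (mul_nonneg (Real.rpow_nonneg hp0.le p) (Real.rpow_nonneg hy.le _))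
    apply mul_le_mul_of_nonneg_right _ hC0
    apply mul_le_mul_of_nonneg_right _ hC0
    exact mul_le_mul_of_nonneg_right h1 hx2.le
  refine le_trans hbase ?_
  -- step 3 : algebra
  apply le_of_eq
  have habs : x ^ 2 = |x| ^ (2:ℝ) := by rw [Real.rpow_two, sq_abs]
  rw [habs, Real.div_rpow (by positivity) (by norm_num),
    Real.mul_rpow (by positivity) hsH.le,
    ← Real.rpow_mul (abs_nonneg x), ← Real.rpow_mul (abs_nonneg x)]
  rw [Real.rpow_neg (by norm_num : (0:ℝ) ≤ 2)]
  rw [div_inv_eq_mul]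
  have hcomb : |x| ^ ((2:ℝ) * (-r)) * |x| ^ (2:ℝ) * |x| ^ ((2:ℝ) * (-p))
      = |x| ^ (-(2 * r + 2 * p - 2)) := by
    rw [← Real.rpow_add hxpos, ← Real.rpow_add hxpos]
    congr 1; ring
  calc |x| ^ ((2:ℝ) * (-r)) * |x| ^ (2:ℝ) * C * C *
        (p ^ p * (|x| ^ ((2:ℝ) * (-p)) * sH ^ (-p) * 2 ^ p))
      = (|x| ^ ((2:ℝ) * (-r)) * |x| ^ (2:ℝ) * |x| ^ ((2:ℝ) * (-p))) *
        (C * C * (p ^ p * 2 ^ p) * sH ^ (-p)) := by ring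
    _ = C ^ 2 * (p ^ p * 2 ^ p) * (|x| ^ (-(2 * r + 2 * p - 2)) * sH ^ (-p)) := by
        rw [hcomb]; ring

/-- for `H ∈ (1/2,1)`, `T > 0` and `r > 3/2 − 1/(2H)`,
`∫_ℝ (1+x²)^{−r} x² ( ∫_0^T ∫_0^T ( ∫_0^{u₁} |u₂−v₂|^{2H−2} du₂ )
( ∫_0^{v₂} |u₁−v₁|^{2H−2} dv₁ ) e^{−x²|u₁−v₂|^{2H}/2} du₁ dv₂ ) dx < ∞`. -/
theorem fbm_current_sobolev_offdiagonal_term_finite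
    (H T r : ℝ) (hH : 1 / 2 < H) (hH1 : H < 1) (hT : 0 < T)
    (hr : 3 / 2 - 1 / (2 * H) < r) :
    ∫⁻ x : ℝ, ∫⁻ u₁ in Set.Icc (0 : ℝ) T, ∫⁻ v₂ in Set.Icc (0 : ℝ) T,
      ENNReal.ofReal ((1 + x ^ 2) ^ (-r) * x ^ 2 *
        (∫ u₂ in (0 : ℝ)..u₁, |u₂ - v₂| ^ (2 * H - 2)) *
        (∫ v₁ in (0 : ℝ)..v₂, |u₁ - v₁| ^ (2 * H - 2)) *
        Real.exp (-(x ^ 2 * |u₁ - v₂| ^ (2 * H)) / 2))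
    < ⊤ := by
  have hH0 : (0:ℝ) < H := by linarith
  have h2H : (0:ℝ) < 2 * H := by linarith
  have ha : (0:ℝ) < 2 * H - 1 := by linarith
  have ha1 : 2 * H - 1 < 1 := by linarith
  set C : ℝ := 2 * T ^ (2 * H - 1) / (2 * H - 1) with hCdef
  have hC0 : 0 < C := div_pos (by positivity) ha
  have hrp : 3 / 2 - r < 1 / (2 * H) := by linarith
  have hinv1 : 1 / (2 * H) < 1 := by rw [div_lt_one h2H]; linarith
  have hinvpos : 0 < 1 / (2 * H) := by positivity
  set p : ℝ := (max 0 (3 / 2 - r) + 1 / (2 * H)) / 2 with hpdef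
  have hp0 : 0 < p := by
    have h := le_max_left (0:ℝ) (3 / 2 - r)
    rw [hpdef]; linarith
  have hpH : p < 1 / (2 * H) := by
    have h1 : max 0 (3 / 2 - r) < 1 / (2 * H) := max_lt hinvpos hrp
    rw [hpdef]; linarith
  have hpr : 3 / 2 - r < p := by
    have h := le_max_right (0:ℝ) (3 / 2 - r)
    rw [hpdef]; linarith
  have hr0 : (0:ℝ) < r := by linarith
  set q : ℝ := 2 * H * p with hqdef
  have hq1 : q < 1 := by
    rw [lt_div_iff₀ h2H] at hpH
    rw [hqdef]; nlinarith
  set β : ℝ := 2 * r + 2 * p - 2 with hβdef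
  have hβ : 1 < β := by rw [hβdef]; linarith
  set L : ℝ := C ^ 2 * (p ^ p * 2 ^ p) with hLdef
  have hL0 : 0 ≤ L := by
    rw [hLdef]
    exact mul_nonneg (pow_nonneg hC0.le 2)
      (mul_nonneg (Real.rpow_nonneg hp0.le p) (Real.rpow_nonneg (by norm_num) p))
  -- kernel bounds
  have ker_nonneg1 : ∀ (c e : ℝ), 0 ≤ c → 0 ≤ ∫ t in (0:ℝ)..c, |t - e| ^ (2 * H - 2) :=
    fun c e hc =>
      intervalIntegral.integral_nonneg hc (fun t _ => Real.rpow_nonneg (abs_nonneg _) _)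
  have ker_nonneg2 : ∀ (c e : ℝ), 0 ≤ c → 0 ≤ ∫ t in (0:ℝ)..c, |e - t| ^ (2 * H - 2) :=
    fun c e hc =>
      intervalIntegral.integral_nonneg hc (fun t _ => Real.rpow_nonneg (abs_nonneg _) _)
  have ker_le1 : ∀ u v : ℝ, u ∈ Set.Icc (0:ℝ) T → v ∈ Set.Icc (0:ℝ) T →
      (∫ t in (0:ℝ)..u, |t - v| ^ (2 * H - 2)) ≤ C := by
    intro u v hu hv
    have h := fbm_aux_kernel_bound hT ha ha1 hu hv
    have e : 2 * H - 1 - 1 = 2 * H - 2 := by ring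
    rw [e] at h
    rw [hCdef]; exact h
  have ker_le2 : ∀ u v : ℝ, u ∈ Set.Icc (0:ℝ) T → v ∈ Set.Icc (0:ℝ) T →
      (∫ t in (0:ℝ)..v, |u - t| ^ (2 * H - 2)) ≤ C := by
    intro u v hu hv
    have e : (∫ t in (0:ℝ)..v, |u - t| ^ (2 * H - 2))
        = ∫ t in (0:ℝ)..v, |t - u| ^ (2 * H - 2) :=
      intervalIntegral.integral_congr (fun t _ => by rw [abs_sub_comm])
    rw [e]; exact ker_le1 v u hv hu
  -- split the x-integral
  rw [← lintegral_add_compl (A := Set.Icc (-1:ℝ) 1) _ measurableSet_Icc]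
  refine ENNReal.add_lt_top.mpr ⟨?_, ?_⟩
  · -- |x| ≤ 1 : bounded integrand
    have hb : ∀ x ∈ Set.Icc (-1:ℝ) 1,
        (∫⁻ u₁ in Set.Icc (0 : ℝ) T, ∫⁻ v₂ in Set.Icc (0 : ℝ) T,
          ENNReal.ofReal ((1 + x ^ 2) ^ (-r) * x ^ 2 *
            (∫ u₂ in (0 : ℝ)..u₁, |u₂ - v₂| ^ (2 * H - 2)) *
            (∫ v₁ in (0 : ℝ)..v₂, |u₁ - v₁| ^ (2 * H - 2)) *
            Real.exp (-(x ^ 2 * |u₁ - v₂| ^ (2 * H)) / 2)))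
        ≤ ENNReal.ofReal (C ^ 2) * volume (Set.Icc (0:ℝ) T) * volume (Set.Icc (0:ℝ) T) := by
      intro x hx
      rw [Set.mem_Icc] at hx
      have hx2le : x ^ 2 ≤ 1 := by nlinarith [hx.1, hx.2]
      calc (∫⁻ u₁ in Set.Icc (0 : ℝ) T, ∫⁻ v₂ in Set.Icc (0 : ℝ) T,
          ENNReal.ofReal ((1 + x ^ 2) ^ (-r) * x ^ 2 *
            (∫ u₂ in (0 : ℝ)..u₁, |u₂ - v₂| ^ (2 * H - 2)) *
            (∫ v₁ in (0 : ℝ)..v₂, |u₁ - v₁| ^ (2 * H - 2)) *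
            Real.exp (-(x ^ 2 * |u₁ - v₂| ^ (2 * H)) / 2)))
          ≤ ∫⁻ _u₁ in Set.Icc (0 : ℝ) T, ∫⁻ _v₂ in Set.Icc (0 : ℝ) T,
              ENNReal.ofReal (C ^ 2) := by
            apply setLIntegral_mono_ae' measurableSet_Icc
            refine Filter.Eventually.of_forall (fun u hu => ?_)
            apply setLIntegral_mono_ae' measurableSet_Icc
            refine Filter.Eventually.of_forall (fun v hv => ?_)
            apply ENNReal.ofReal_le_ofReal
            refine fbm_aux_prod5_le (by positivity) ?_ (sq_nonneg x) hx2le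
              (ker_nonneg1 u v hu.1) (ker_le1 u v hu hv)
              (ker_nonneg2 v u hv.1) (ker_le2 u v hu hv)
              (Real.exp_pos _).le ?_
            · exact Real.rpow_le_one_of_one_le_of_nonpos (by nlinarith [sq_nonneg x])
                (by linarith)
            · rw [Real.exp_le_one_iff]
              have hnn : (0:ℝ) ≤ x ^ 2 * |u - v| ^ (2 * H) := by positivity
              linarith
        _ = ENNReal.ofReal (C ^ 2) * volume (Set.Icc (0:ℝ) T) * volume (Set.Icc (0:ℝ) T) := by
            rw [setLIntegral_const, setLIntegral_const]
    refine lt_of_le_of_lt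
      (setLIntegral_mono_ae' measurableSet_Icc (Filter.Eventually.of_forall hb)) ?_
    rw [setLIntegral_const, Real.volume_Icc, Real.volume_Icc]
    exact ENNReal.mul_lt_top (ENNReal.mul_lt_top
      (ENNReal.mul_lt_top ENNReal.ofReal_lt_top ENNReal.ofReal_lt_top)
      ENNReal.ofReal_lt_top) ENNReal.ofReal_lt_top
  · -- |x| > 1 : decay in x
    have hD := fbm_aux_symm_finite (q := q) (T := T) hq1 hT
    have hS : (∫⁻ u in Set.Icc (0:ℝ) T, ∫⁻ v in Set.Icc (0:ℝ) T,
        ENNReal.ofReal (|u - v| ^ (-q)))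
        ≤ (∫⁻ w in Set.Icc (-T) T, ENNReal.ofReal (|w| ^ (-q))) * ENNReal.ofReal T := by
      calc (∫⁻ u in Set.Icc (0:ℝ) T, ∫⁻ v in Set.Icc (0:ℝ) T,
          ENNReal.ofReal (|u - v| ^ (-q)))
          ≤ ∫⁻ _u in Set.Icc (0:ℝ) T,
              (∫⁻ w in Set.Icc (-T) T, ENNReal.ofReal (|w| ^ (-q))) := by
            apply setLIntegral_mono_ae' measurableSet_Icc
            exact Filter.Eventually.of_forall (fun u hu => fbm_aux_inner_le hu)
        _ = _ := by rw [setLIntegral_const, Real.volume_Icc, sub_zero]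
    have hSfin : (∫⁻ u in Set.Icc (0:ℝ) T, ∫⁻ v in Set.Icc (0:ℝ) T,
        ENNReal.ofReal (|u - v| ^ (-q))) < ⊤ :=
      lt_of_le_of_lt hS (ENNReal.mul_lt_top hD ENNReal.ofReal_lt_top)
    have hbig : ∀ x ∈ (Set.Icc (-1:ℝ) 1)ᶜ,
        (∫⁻ u₁ in Set.Icc (0 : ℝ) T, ∫⁻ v₂ in Set.Icc (0 : ℝ) T,
          ENNReal.ofReal ((1 + x ^ 2) ^ (-r) * x ^ 2 *
            (∫ u₂ in (0 : ℝ)..u₁, |u₂ - v₂| ^ (2 * H - 2)) *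
            (∫ v₁ in (0 : ℝ)..v₂, |u₁ - v₁| ^ (2 * H - 2)) *
            Real.exp (-(x ^ 2 * |u₁ - v₂| ^ (2 * H)) / 2)))
        ≤ ENNReal.ofReal (L * |x| ^ (-β)) *
            (∫⁻ u in Set.Icc (0:ℝ) T, ∫⁻ v in Set.Icc (0:ℝ) T,
              ENNReal.ofReal (|u - v| ^ (-q))) := by
      intro x hx
      have hx1 : 1 < |x| := by
        simp only [Set.mem_compl_iff, Set.mem_Icc, not_and_or, not_le] at hx
        rcases hx with h | h
        · rw [abs_of_neg (by linarith)]; linarith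
        · rw [abs_of_pos (by linarith)]; linarith
      calc (∫⁻ u₁ in Set.Icc (0 : ℝ) T, ∫⁻ v₂ in Set.Icc (0 : ℝ) T,
          ENNReal.ofReal ((1 + x ^ 2) ^ (-r) * x ^ 2 *
            (∫ u₂ in (0 : ℝ)..u₁, |u₂ - v₂| ^ (2 * H - 2)) *
            (∫ v₁ in (0 : ℝ)..v₂, |u₁ - v₁| ^ (2 * H - 2)) *
            Real.exp (-(x ^ 2 * |u₁ - v₂| ^ (2 * H)) / 2)))
          ≤ ∫⁻ u in Set.Icc (0:ℝ) T, ∫⁻ v in Set.Icc (0:ℝ) T,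
              ENNReal.ofReal (L * |x| ^ (-β)) * ENNReal.ofReal (|u - v| ^ (-q)) := by
            apply setLIntegral_mono_ae' measurableSet_Icc
            refine Filter.Eventually.of_forall (fun u hu => ?_)
            apply lintegral_mono_ae
            have hae : ∀ᵐ v ∂(volume.restrict (Set.Icc (0:ℝ) T)),
                v ∈ Set.Icc (0:ℝ) T ∧ v ≠ u := by
              refine (ae_restrict_mem measurableSet_Icc).and ?_
              apply ae_restrict_of_ae
              refine ae_iff.mpr ?_
              simp only [ne_eq, not_not, Set.setOf_eq_eq_singleton]
              exact Real.volume_singleton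
            refine hae.mono (fun v hv => ?_)
            obtain ⟨hvmem, hvne⟩ := hv
            have huv : u - v ≠ 0 := sub_ne_zero.mpr (Ne.symm hvne)
            have hsH : 0 < |u - v| ^ (2 * H) :=
              Real.rpow_pos_of_pos (abs_pos.mpr huv) _
            have key := fbm_aux_pointwise (C := C) hr0 hp0 hx1 hsH
              (ker_nonneg1 u v hu.1) (ker_le1 u v hu hvmem)
              (ker_nonneg2 v u hvmem.1) (ker_le2 u v hu hvmem)
            refine le_trans (ENNReal.ofReal_le_ofReal key) ?_
            have e1 : (|u - v| ^ (2 * H)) ^ (-p) = |u - v| ^ (-q) := by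
              rw [← Real.rpow_mul (abs_nonneg _)]
              congr 1; rw [hqdef]; ring
            have e2 : C ^ 2 * (p ^ p * 2 ^ p) *
                (|x| ^ (-(2 * r + 2 * p - 2)) * |u - v| ^ (-q))
                = (L * |x| ^ (-β)) * |u - v| ^ (-q) := by
              rw [hLdef, hβdef]; ring
            rw [e1, e2, ENNReal.ofReal_mul
              (mul_nonneg hL0 (Real.rpow_nonneg (abs_nonneg x) _))]
        _ = ENNReal.ofReal (L * |x| ^ (-β)) *
            (∫⁻ u in Set.Icc (0:ℝ) T, ∫⁻ v in Set.Icc (0:ℝ) T,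
              ENNReal.ofReal (|u - v| ^ (-q))) := by
            simp_rw [lintegral_const_mul' (ENNReal.ofReal (L * |x| ^ (-β))) _
              ENNReal.ofReal_ne_top]
    refine lt_of_le_of_lt
      (setLIntegral_mono_ae' measurableSet_Icc.compl (Filter.Eventually.of_forall hbig)) ?_
    rw [lintegral_mul_const' _ _ hSfin.ne]
    refine ENNReal.mul_lt_top ?_ hSfin
    have heq : ∫⁻ x in (Set.Icc (-1:ℝ) 1)ᶜ, ENNReal.ofReal (L * |x| ^ (-β))
        = ENNReal.ofReal L * ∫⁻ x in (Set.Icc (-1:ℝ) 1)ᶜ, ENNReal.ofReal (|x| ^ (-β)) := by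
      simp_rw [ENNReal.ofReal_mul hL0]
      exact lintegral_const_mul' _ _ ENNReal.ofReal_ne_top
    rw [heq]
    exact ENNReal.mul_lt_top ENNReal.ofReal_lt_top (fbm_aux_tail_finite hβ)
end

section
/- Let d ≥ 1, H ∈ (1/2,1), T > 0 and r > d/2 − 1 + 1/(2H). Then ∫_{ℝ^d} (1+|x|²)^{−r} ( ∫_0^T ∫_0^T |u−v|^{2H−2} e^{−x_1²|u−v|^{2H}/2} du dv ) dx < ∞, where x = (x_1,…,x_d) ∈ ℝ^d and |x| is the Euclidean norm. (This is the finiteness of the term C_k in the proof that the d-dimensional fractional Brownian current belongs to H^{−r}(ℝ^d;ℝ^d) for N = 1.) -/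
open MeasureTheory Real

open scoped ENNReal

open Set


lemma time_slice {e T u : ℝ} (he : -1 < e) (hu : u ∈ Set.Icc (0:ℝ) T) :
    ∫⁻ v in Set.Icc (0:ℝ) T, ENNReal.ofReal (|u - v| ^ e)
      ≤ ENNReal.ofReal (2 * T ^ (e + 1) / (e + 1)) := by
  obtain ⟨h0u, huT⟩ := hu
  have h0T : (0:ℝ) ≤ T := le_trans h0u huT
  have hep : 0 < e + 1 := by linarith
  have I1 : IntervalIntegrable (fun v => |u - v| ^ e) volume 0 u := by
    have h := ((intervalIntegral.intervalIntegrable_rpow' he (a := 0) (b := u)).comp_sub_left u).symm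
    rw [sub_self, sub_zero] at h
    rw [intervalIntegrable_iff] at h ⊢
    refine h.congr_fun (fun v hv => ?_) measurableSet_uIoc
    rw [Set.uIoc_of_le h0u] at hv
    rw [abs_of_nonneg (by linarith [hv.2] : (0:ℝ) ≤ u - v)]
  have I2 : IntervalIntegrable (fun v => |u - v| ^ e) volume u T := by
    have h := (intervalIntegral.intervalIntegrable_rpow' he (a := 0) (b := T - u)).comp_sub_right u
    rw [zero_add, sub_add_cancel] at h
    rw [intervalIntegrable_iff] at h ⊢
    refine h.congr_fun (fun v hv => ?_) measurableSet_uIoc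
    rw [Set.uIoc_of_le huT] at hv
    rw [abs_sub_comm, abs_of_nonneg (by linarith [hv.1] : (0:ℝ) ≤ v - u)]
  have hnn : ∀ v : ℝ, 0 ≤ |u - v| ^ e := fun v => rpow_nonneg (abs_nonneg _) _
  have hInt : IntegrableOn (fun v => |u - v| ^ e) (Set.Icc 0 T) volume := by
    rw [integrableOn_Icc_iff_integrableOn_Ioc]
    exact (intervalIntegrable_iff_integrableOn_Ioc_of_le h0T).mp (I1.trans I2)
  rw [← ofReal_integral_eq_lintegral_ofReal hInt (Filter.Eventually.of_forall hnn)]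
  apply ENNReal.ofReal_le_ofReal
  have hsplit : ∫ v in Set.Icc (0:ℝ) T, |u - v| ^ e
      = (∫ v in (0:ℝ)..u, |u - v| ^ e) + ∫ v in u..T, |u - v| ^ e := by
    rw [integral_Icc_eq_integral_Ioc, ← intervalIntegral.integral_of_le h0T,
      ← intervalIntegral.integral_add_adjacent_intervals I1 I2]
  have e1 : (∫ v in (0:ℝ)..u, |u - v| ^ e) = u ^ (e+1) / (e+1) := by
    have hc : (∫ v in (0:ℝ)..u, |u - v| ^ e) = ∫ v in (0:ℝ)..u, (u - v) ^ e := by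
      apply intervalIntegral.integral_congr
      intro v hv
      rw [Set.uIcc_of_le h0u] at hv
      show |u - v| ^ e = (u - v) ^ e
      rw [abs_of_nonneg (by linarith [hv.2] : (0:ℝ) ≤ u - v)]
    rw [hc, intervalIntegral.integral_comp_sub_left (fun x => x ^ e) u, sub_self, sub_zero,
      integral_rpow (Or.inl he), Real.zero_rpow hep.ne', sub_zero]
  have e2 : (∫ v in u..T, |u - v| ^ e) = (T - u) ^ (e+1) / (e+1) := by
    have hc : (∫ v in u..T, |u - v| ^ e) = ∫ v in u..T, (v - u) ^ e := by
      apply intervalIntegral.integral_congr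
      intro v hv
      rw [Set.uIcc_of_le huT] at hv
      show |u - v| ^ e = (v - u) ^ e
      rw [abs_sub_comm, abs_of_nonneg (by linarith [hv.1] : (0:ℝ) ≤ v - u)]
    rw [hc, intervalIntegral.integral_comp_sub_right (fun x => x ^ e) u, sub_self,
      integral_rpow (Or.inl he), Real.zero_rpow hep.ne', sub_zero]
  rw [hsplit, e1, e2, ← add_div, div_le_div_iff₀ hep hep]
  have h1 : u ^ (e+1) ≤ T ^ (e+1) := rpow_le_rpow h0u huT hep.le
  have h2 : (T - u) ^ (e+1) ≤ T ^ (e+1) := rpow_le_rpow (by linarith) (by linarith) hep.le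
  nlinarith [hep]

lemma gauss_bound {α c : ℝ} (h0 : 0 < α) (h1 : α < 1/2) (hc : 0 < c) :
    ∫⁻ a : ℝ, ENNReal.ofReal ((1 + a ^ 2) ^ (-α) * Real.exp (-(a ^ 2 * c) / 2))
      ≤ ENNReal.ofReal ((c/2) ^ ((2*α - 1)/2) * Real.Gamma ((1 - 2*α)/2)) := by
  have hq : (-1:ℝ) < -(2*α) := by linarith
  have hb : (0:ℝ) < c/2 := by linarith
  set g : ℝ → ℝ≥0∞ := fun a => ENNReal.ofReal (|a| ^ (-(2*α)) * Real.exp (-(c/2) * a ^ 2))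
    with hgdef
  have step1 : ∫⁻ a : ℝ, ENNReal.ofReal ((1 + a ^ 2) ^ (-α) * Real.exp (-(a ^ 2 * c) / 2))
      ≤ ∫⁻ a, g a := by
    apply lintegral_mono_ae
    have h0ae : ∀ᵐ a : ℝ, a ≠ 0 := by
      rw [ae_iff]
      simpa using Real.volume_singleton (a := 0)
    filter_upwards [h0ae] with a ha
    apply ENNReal.ofReal_le_ofReal
    have hexp : -(a ^ 2 * c) / 2 = -(c/2) * a ^ 2 := by ring
    rw [hexp]
    apply mul_le_mul_of_nonneg_right _ (Real.exp_pos _).le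
    have ha2 : (0:ℝ) < a ^ 2 := by positivity
    have habs : |a| ^ (-(2*α)) = (a ^ 2) ^ (-α) := by
      rw [← sq_abs, ← Real.rpow_natCast |a| 2, ← Real.rpow_mul (abs_nonneg a)]
      norm_num
    rw [habs]
    exact Real.rpow_le_rpow_of_nonpos ha2 (by linarith) (by linarith)
  refine le_trans step1 ?_
  have hsplit : ∫⁻ a, g a = 2 * ∫⁻ a in Set.Ioi (0:ℝ), g a := by
    rw [← lintegral_add_compl g (measurableSet_Iic (a := (0:ℝ))), compl_Iic]
    have hIic : ∫⁻ a in Set.Iic (0:ℝ), g a = ∫⁻ a in Set.Ioi (0:ℝ), g a := by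
      have hmp : MeasurePreserving (fun a : ℝ => -a) volume volume :=
        Measure.measurePreserving_neg _
      have hemb : MeasurableEmbedding (fun a : ℝ => -a) :=
        (Homeomorph.neg ℝ).measurableEmbedding
      have hpre := hmp.setLIntegral_comp_preimage_emb hemb g (Set.Iic (0:ℝ))
      have hset : (fun a : ℝ => -a) ⁻¹' Set.Iic (0:ℝ) = Set.Ici (0:ℝ) := by
        ext x; simp [neg_nonpos]
      rw [hset] at hpre
      rw [← hpre, ← MeasureTheory.Measure.restrict_congr_set Ioi_ae_eq_Ici]
      apply lintegral_congr
      intro a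
      simp [hgdef, abs_neg, neg_sq]
    rw [hIic, two_mul]
  rw [hsplit]
  have hcongr : ∫⁻ a in Set.Ioi (0:ℝ), g a
      = ∫⁻ a in Set.Ioi (0:ℝ), ENNReal.ofReal (a ^ (-(2*α)) * Real.exp (-(c/2) * a ^ 2)) := by
    apply lintegral_congr_ae
    filter_upwards [ae_restrict_mem measurableSet_Ioi] with a ha
    simp [hgdef, abs_of_pos (show (0:ℝ) < a from ha)]
  have hInt : IntegrableOn (fun a : ℝ => a ^ (-(2*α)) * Real.exp (-(c/2) * a ^ 2))
      (Set.Ioi (0:ℝ)) volume := integrableOn_rpow_mul_exp_neg_mul_sq hb hq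
  have hnn : 0 ≤ᵐ[volume.restrict (Set.Ioi (0:ℝ))]
      fun a : ℝ => a ^ (-(2*α)) * Real.exp (-(c/2) * a ^ 2) := by
    filter_upwards [ae_restrict_mem measurableSet_Ioi] with a ha
    have : (0:ℝ) ≤ a ^ (-(2*α)) := Real.rpow_nonneg (le_of_lt ha) _
    positivity
  rw [hcongr, ← ofReal_integral_eq_lintegral_ofReal hInt hnn]
  have hval : ∫ a in Set.Ioi (0:ℝ), a ^ (-(2*α)) * Real.exp (-(c/2) * a ^ 2)
      = (c/2) ^ (-(-(2*α) + 1)/2) * (1/2) * Real.Gamma ((-(2*α) + 1)/2) := by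
    rw [← integral_rpow_mul_exp_neg_mul_rpow (by norm_num : (0:ℝ) < 2) hq hb]
    refine setIntegral_congr_fun measurableSet_Ioi (fun x hx => ?_)
    rw [Real.rpow_two]
  rw [hval]
  have h2 : (2:ℝ≥0∞) = ENNReal.ofReal 2 := by norm_num
  rw [h2, ← ENNReal.ofReal_mul (by norm_num : (0:ℝ) ≤ 2)]
  apply le_of_eq
  congr 1
  have he1 : (-(-(2*α) + 1)/2 : ℝ) = (2*α - 1)/2 := by ring
  have he2 : ((-(2*α) + 1)/2 : ℝ) = (1 - 2*α)/2 := by ring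
  rw [he1, he2]
  ring

lemma jap_finite {n : ℕ} {β : ℝ} (hβ : (n:ℝ)/2 < β) :
    ∫⁻ y : EuclideanSpace ℝ (Fin n), ENNReal.ofReal ((1 + ‖y‖^2) ^ (-β)) < ⊤ := by
  have hβ0 : (0:ℝ) < β := lt_of_le_of_lt (by positivity) hβ
  have hpt : ∀ y : EuclideanSpace ℝ (Fin n),
      ENNReal.ofReal ((1 + ‖y‖^2) ^ (-β))
        ≤ ENNReal.ofReal ((2:ℝ)^β * (1 + ‖y‖) ^ (-(2*β))) := by
    intro y
    apply ENNReal.ofReal_le_ofReal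
    set t := ‖y‖ with ht
    have ht0 : (0:ℝ) ≤ t := norm_nonneg _
    have key : (1 + t) ^ (-(2*β)) = ((1+t)^2 : ℝ) ^ (-β) := by
      rw [← Real.rpow_natCast (1+t) 2, ← Real.rpow_mul (by linarith)]
      norm_num
    have h2 : ((1+t)^2 : ℝ) ≤ 2 * (1 + t^2) := by nlinarith [sq_nonneg (1 - t)]
    have hbnd : (2*(1+t^2) : ℝ)^(-β) ≤ ((1+t)^2 : ℝ)^(-β) :=
      Real.rpow_le_rpow_of_nonpos (by positivity) h2 (by linarith)
    calc (1 + t^2 : ℝ)^(-β) = 2^β * ((2:ℝ)^(-β) * (1+t^2)^(-β)) := by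
          rw [← mul_assoc, ← Real.rpow_add (by norm_num : (0:ℝ) < 2)]
          simp
      _ = 2^β * (2*(1+t^2) : ℝ)^(-β) := by
          rw [Real.mul_rpow (by norm_num) (by positivity)]
      _ ≤ 2^β * ((1+t)^2 : ℝ)^(-β) := by
          have h2b : (0:ℝ) ≤ 2^β := by positivity
          exact mul_le_mul_of_nonneg_left hbnd h2b
      _ = 2^β * (1+t)^(-(2*β)) := by rw [key]
  calc ∫⁻ y : EuclideanSpace ℝ (Fin n), ENNReal.ofReal ((1 + ‖y‖^2) ^ (-β))
      ≤ ∫⁻ y : EuclideanSpace ℝ (Fin n),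
          ENNReal.ofReal ((2:ℝ)^β * (1 + ‖y‖) ^ (-(2*β))) := lintegral_mono hpt
    _ = ENNReal.ofReal ((2:ℝ)^β)
        * ∫⁻ y : EuclideanSpace ℝ (Fin n), ENNReal.ofReal ((1 + ‖y‖) ^ (-(2*β))) := by
        simp_rw [ENNReal.ofReal_mul (by positivity : (0:ℝ) ≤ (2:ℝ)^β)]
        rw [lintegral_const_mul' _ _ ENNReal.ofReal_ne_top]
    _ < ⊤ := by
        apply ENNReal.mul_lt_top ENNReal.ofReal_lt_top
        apply finite_integral_one_add_norm
        rw [finrank_euclideanSpace_fin]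
        linarith

lemma meas_aux {γ : Type*} [MeasurableSpace γ] {g : γ → ℝ → ℝ → ℝ}
    (hg : Measurable fun q : (γ × ℝ) × ℝ => g q.1.1 q.1.2 q.2)
    (μ ν : Measure ℝ) [SFinite μ] [SFinite ν] :
    Measurable fun p : γ => ∫⁻ u, ∫⁻ v, ENNReal.ofReal (g p u v) ∂ν ∂μ := by
  have h1 : Measurable fun q : γ × ℝ => ∫⁻ v, ENNReal.ofReal (g q.1 q.2 v) ∂ν :=
    Measurable.lintegral_prod_right' (ENNReal.measurable_ofReal.comp hg)
  exact Measurable.lintegral_prod_right' h1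

lemma lemA {H T α : ℝ} (hH : 1/2 < H) (hH1 : H < 1) (hT : 0 < T)
    (hα1 : 1/(2*H) - 1/2 < α) (hα2 : α < 1/2) :
    ∫⁻ a : ℝ, ∫⁻ u in Set.Icc (0:ℝ) T, ∫⁻ v in Set.Icc (0:ℝ) T,
      ENNReal.ofReal ((1 + a ^ 2) ^ (-α) * |u - v| ^ (2*H - 2) *
        Real.exp (-(a ^ 2 * |u - v| ^ (2*H)) / 2)) < ⊤ := by
  have h2H : (0:ℝ) < 2*H := by linarith
  have hα0 : 0 < α := by
    have h12 : (1:ℝ)/2 < 1/(2*H) := by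
      rw [div_lt_div_iff₀ two_pos h2H]
      linarith
    linarith
  set e : ℝ := 2*H - 2 + 2*H*((2*α - 1)/2) with he_def
  have hee : 2*H*(1/(2*H) - 1/2) = 1 - H := by
    field_simp
  have he : -1 < e := by
    have := mul_lt_mul_of_pos_left hα1 h2H
    rw [hee] at this
    rw [he_def]
    nlinarith
  have hΓ : 0 < Real.Gamma ((1 - 2*α)/2) := Real.Gamma_pos_of_pos (by linarith)
  set K : ℝ := (2:ℝ)⁻¹ ^ ((2*α - 1)/2) * Real.Gamma ((1 - 2*α)/2) with hK_def
  have hK : 0 < K := by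
    apply mul_pos _ hΓ
    apply Real.rpow_pos_of_pos
    norm_num
  -- pointwise-in-(u,v) bound for the a-integral
  have key : ∀ u v : ℝ,
      (∫⁻ a : ℝ, ENNReal.ofReal ((1 + a ^ 2) ^ (-α) * |u - v| ^ (2*H - 2) *
        Real.exp (-(a ^ 2 * |u - v| ^ (2*H)) / 2))) ≤ ENNReal.ofReal (K * |u - v| ^ e) := by
    intro u v
    rcases eq_or_ne u v with huv | huv
    · have : ∀ a : ℝ, ENNReal.ofReal ((1 + a ^ 2) ^ (-α) * |u - v| ^ (2*H - 2) *
          Real.exp (-(a ^ 2 * |u - v| ^ (2*H)) / 2)) = 0 := by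
        intro a
        rw [huv]
        simp [Real.zero_rpow (by linarith : 2*H - 2 ≠ 0)]
      simp only [this, lintegral_zero]
      exact zero_le'
    · set s : ℝ := |u - v| with hs_def
      have hs0 : 0 < s := abs_pos.mpr (sub_ne_zero.mpr huv)
      have hc : 0 < s ^ (2*H) := Real.rpow_pos_of_pos hs0 _
      calc ∫⁻ a : ℝ, ENNReal.ofReal ((1 + a ^ 2) ^ (-α) * s ^ (2*H - 2) *
              Real.exp (-(a ^ 2 * s ^ (2*H)) / 2))
          = ∫⁻ a : ℝ, ENNReal.ofReal (s ^ (2*H-2)) *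
              ENNReal.ofReal ((1 + a^2)^(-α) * Real.exp (-(a^2 * s^(2*H))/2)) := by
            apply lintegral_congr
            intro a
            rw [← ENNReal.ofReal_mul (Real.rpow_nonneg hs0.le _)]
            congr 1
            ring
        _ = ENNReal.ofReal (s ^ (2*H-2)) *
              ∫⁻ a : ℝ, ENNReal.ofReal ((1 + a^2)^(-α) * Real.exp (-(a^2 * s^(2*H))/2)) :=
            lintegral_const_mul' _ _ ENNReal.ofReal_ne_top
        _ ≤ ENNReal.ofReal (s ^ (2*H-2)) *
              ENNReal.ofReal ((s^(2*H)/2) ^ ((2*α - 1)/2) * Real.Gamma ((1 - 2*α)/2)) :=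
            mul_le_mul_right (gauss_bound hα0 hα2 hc) _
        _ = ENNReal.ofReal (K * s ^ e) := by
            rw [← ENNReal.ofReal_mul (Real.rpow_nonneg hs0.le _)]
            congr 1
            rw [div_eq_mul_inv (s^(2*H)) 2,
              Real.mul_rpow hc.le (by norm_num : (0:ℝ) ≤ 2⁻¹),
              ← Real.rpow_mul hs0.le, hK_def, he_def, Real.rpow_add hs0]
            ring
  -- measurability of the full integrand
  have hbase : Measurable fun q : (ℝ × ℝ) × ℝ =>
      (1 + q.1.1 ^ 2) ^ (-α) * |q.1.2 - q.2| ^ (2*H - 2) *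
        Real.exp (-(q.1.1 ^ 2 * |q.1.2 - q.2| ^ (2*H)) / 2) := by fun_prop
  -- swap the a-integral inside
  have swap1 : ∫⁻ a : ℝ, ∫⁻ u in Set.Icc (0:ℝ) T, ∫⁻ v in Set.Icc (0:ℝ) T,
      ENNReal.ofReal ((1 + a ^ 2) ^ (-α) * |u - v| ^ (2*H - 2) *
        Real.exp (-(a ^ 2 * |u - v| ^ (2*H)) / 2))
      = ∫⁻ u in Set.Icc (0:ℝ) T, ∫⁻ a : ℝ, ∫⁻ v in Set.Icc (0:ℝ) T,
      ENNReal.ofReal ((1 + a ^ 2) ^ (-α) * |u - v| ^ (2*H - 2) *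
        Real.exp (-(a ^ 2 * |u - v| ^ (2*H)) / 2)) := by
    apply lintegral_lintegral_swap
    exact (Measurable.lintegral_prod_right'
      (ENNReal.measurable_ofReal.comp hbase)).aemeasurable
  rw [swap1]
  have swap2 : ∀ u : ℝ, ∫⁻ a : ℝ, ∫⁻ v in Set.Icc (0:ℝ) T,
      ENNReal.ofReal ((1 + a ^ 2) ^ (-α) * |u - v| ^ (2*H - 2) *
        Real.exp (-(a ^ 2 * |u - v| ^ (2*H)) / 2))
      = ∫⁻ v in Set.Icc (0:ℝ) T, ∫⁻ a : ℝ,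
      ENNReal.ofReal ((1 + a ^ 2) ^ (-α) * |u - v| ^ (2*H - 2) *
        Real.exp (-(a ^ 2 * |u - v| ^ (2*H)) / 2)) := by
    intro u
    apply lintegral_lintegral_swap
    have hb2 : Measurable fun q : ℝ × ℝ =>
        (1 + q.1 ^ 2) ^ (-α) * |u - q.2| ^ (2*H - 2) *
          Real.exp (-(q.1 ^ 2 * |u - q.2| ^ (2*H)) / 2) := by fun_prop
    exact (ENNReal.measurable_ofReal.comp hb2).aemeasurable
  calc ∫⁻ u in Set.Icc (0:ℝ) T, ∫⁻ a : ℝ, ∫⁻ v in Set.Icc (0:ℝ) T,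
      ENNReal.ofReal ((1 + a ^ 2) ^ (-α) * |u - v| ^ (2*H - 2) *
        Real.exp (-(a ^ 2 * |u - v| ^ (2*H)) / 2))
      = ∫⁻ u in Set.Icc (0:ℝ) T, ∫⁻ v in Set.Icc (0:ℝ) T, ∫⁻ a : ℝ,
      ENNReal.ofReal ((1 + a ^ 2) ^ (-α) * |u - v| ^ (2*H - 2) *
        Real.exp (-(a ^ 2 * |u - v| ^ (2*H)) / 2)) := by
        apply lintegral_congr
        intro u
        exact swap2 u
    _ ≤ ∫⁻ u in Set.Icc (0:ℝ) T, ∫⁻ v in Set.Icc (0:ℝ) T,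
        ENNReal.ofReal (K * |u - v| ^ e) :=
      lintegral_mono fun u => lintegral_mono fun v => key u v
    _ = ∫⁻ u in Set.Icc (0:ℝ) T, ENNReal.ofReal K *
        ∫⁻ v in Set.Icc (0:ℝ) T, ENNReal.ofReal (|u - v| ^ e) := by
        apply lintegral_congr
        intro u
        rw [← lintegral_const_mul' _ _ ENNReal.ofReal_ne_top]
        apply lintegral_congr
        intro v
        rw [← ENNReal.ofReal_mul hK.le]
    _ ≤ ∫⁻ _u in Set.Icc (0:ℝ) T,
        ENNReal.ofReal K * ENNReal.ofReal (2 * T ^ (e + 1) / (e + 1)) := by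
        apply lintegral_mono_ae
        filter_upwards [ae_restrict_mem measurableSet_Icc] with u hu
        exact mul_le_mul_right (time_slice he hu) _
    _ < ⊤ := by
        rw [setLIntegral_const]
        apply ENNReal.mul_lt_top
        · exact ENNReal.mul_lt_top ENNReal.ofReal_lt_top ENNReal.ofReal_lt_top
        · rw [Real.volume_Icc]
          exact ENNReal.ofReal_lt_top

/-- for `d ≥ 1`, `H ∈ (1/2,1)`, `T > 0` and `r > d/2 − 1 + 1/(2H)`,
`∫_{ℝ^d} (1+|x|²)^{−r} ( ∫_0^T ∫_0^T |u−v|^{2H−2} e^{−x₁²|u−v|^{2H}/2} du dv ) dx < ∞`. -/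
theorem fbm_multidim_current_term_Ck_finite
    (d : ℕ) (hd : 1 ≤ d) (H T r : ℝ) (hH : 1 / 2 < H) (hH1 : H < 1) (hT : 0 < T)
    (hr : (d : ℝ) / 2 - 1 + 1 / (2 * H) < r) :
    ∫⁻ x : EuclideanSpace ℝ (Fin d), ∫⁻ u in Set.Icc (0 : ℝ) T, ∫⁻ v in Set.Icc (0 : ℝ) T,
      ENNReal.ofReal ((1 + ‖x‖ ^ 2) ^ (-r) * |u - v| ^ (2 * H - 2) *
        Real.exp (-((x ⟨0, hd⟩) ^ 2 * |u - v| ^ (2 * H)) / 2))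
    < ⊤ := by
  obtain ⟨n, rfl⟩ : ∃ n, d = n + 1 := ⟨d - 1, (Nat.succ_pred_eq_of_pos hd).symm⟩
  have h2H : (0:ℝ) < 2*H := by linarith
  have h12 : (1:ℝ)/2 < 1/(2*H) := by
    rw [div_lt_div_iff₀ two_pos h2H]; linarith
  have h121 : 1/(2*H) < 1 := by
    rw [div_lt_one h2H]; linarith
  have hrn : 1/(2*H) - 1/2 < r - (n:ℝ)/2 := by push_cast at hr; linarith
  set α : ℝ := (1/(2*H) - 1/2 + min (1/2) (r - (n:ℝ)/2))/2 with hα_def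
  have hmin : 1/(2*H) - 1/2 < min (1/2) (r - (n:ℝ)/2) := lt_min (by linarith) hrn
  have hα1 : 1/(2*H) - 1/2 < α := by rw [hα_def]; linarith
  have hαm : α < min (1/2) (r - (n:ℝ)/2) := by rw [hα_def]; linarith
  have hα2 : α < 1/2 := lt_of_lt_of_le hαm (min_le_left _ _)
  have hα3 : α < r - (n:ℝ)/2 := lt_of_lt_of_le hαm (min_le_right _ _)
  have hα0 : 0 < α := by linarith
  set β : ℝ := r - α with hβ_def
  have hβ : (n:ℝ)/2 < β := by rw [hβ_def]; linarith
  have hβ0 : 0 < β := lt_of_le_of_lt (by positivity) hβ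
  -- functions
  set Ψ : (Fin (n+1) → ℝ) → ℝ≥0∞ := fun y =>
    ∫⁻ u in Set.Icc (0 : ℝ) T, ∫⁻ v in Set.Icc (0 : ℝ) T,
      ENNReal.ofReal ((1 + ∑ i, y i ^ 2) ^ (-r) * |u - v| ^ (2 * H - 2) *
        Real.exp (-(y 0 ^ 2 * |u - v| ^ (2 * H)) / 2)) with hΨ_def
  have hΨmeas : Measurable Ψ := by
    apply meas_aux (g := fun (y : Fin (n+1) → ℝ) u v =>
      (1 + ∑ i, y i ^ 2) ^ (-r) * |u - v| ^ (2 * H - 2) *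
        Real.exp (-(y 0 ^ 2 * |u - v| ^ (2 * H)) / 2))
    fun_prop
  set Ψ' : ℝ × (Fin n → ℝ) → ℝ≥0∞ := fun p =>
    ∫⁻ u in Set.Icc (0 : ℝ) T, ∫⁻ v in Set.Icc (0 : ℝ) T,
      ENNReal.ofReal ((1 + (p.1 ^ 2 + ∑ j, p.2 j ^ 2)) ^ (-r) * |u - v| ^ (2 * H - 2) *
        Real.exp (-(p.1 ^ 2 * |u - v| ^ (2 * H)) / 2)) with hΨ'_def
  have hΨ'meas : Measurable Ψ' := by
    apply meas_aux (g := fun (p : ℝ × (Fin n → ℝ)) u v =>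
      (1 + (p.1 ^ 2 + ∑ j, p.2 j ^ 2)) ^ (-r) * |u - v| ^ (2 * H - 2) *
        Real.exp (-(p.1 ^ 2 * |u - v| ^ (2 * H)) / 2))
    fun_prop
  -- the weight function on the tail
  set W : (Fin n → ℝ) → ℝ≥0∞ := fun z => ENNReal.ofReal ((1 + ∑ j, z j ^ 2) ^ (-β))
    with hW_def
  have hWmeas : Measurable W := by
    apply Measurable.ennreal_ofReal
    fun_prop
  have hC : (∫⁻ z : Fin n → ℝ, W z) < ⊤ := by
    have h3 := (EuclideanSpace.volume_preserving_symm_measurableEquiv_toLp (Fin n)).lintegral_comp hWmeas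
    rw [← h3]
    have : ∀ w : EuclideanSpace ℝ (Fin n),
        W ((MeasurableEquiv.toLp 2 (Fin n → ℝ)).symm w)
          = ENNReal.ofReal ((1 + ‖w‖ ^ 2) ^ (-β)) := by
      intro w
      have hnorm : ‖w‖ ^ 2 = ∑ i, w i ^ 2 := by
        rw [EuclideanSpace.norm_eq, Real.sq_sqrt (by positivity)]
        simp [sq_abs]
      rw [hW_def]
      simp only [hnorm]
      rfl
    rw [lintegral_congr this]
    exact jap_finite hβ
  -- pointwise splitting bound
  have split_bound : ∀ (a S : ℝ), 0 ≤ S →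
      (1 + (a ^ 2 + S)) ^ (-r) ≤ (1 + S) ^ (-β) * (1 + a ^ 2) ^ (-α) := by
    intro a S hS
    have h1 : (0:ℝ) < 1 + a ^ 2 := by positivity
    have h2 : (0:ℝ) < 1 + S := by linarith
    have h3 : (0:ℝ) < 1 + (a ^ 2 + S) := by positivity
    rw [Real.rpow_neg h3.le, Real.rpow_neg h2.le, Real.rpow_neg h1.le, ← mul_inv]
    apply inv_anti₀ (by positivity)
    calc (1 + S) ^ β * (1 + a ^ 2) ^ α
        ≤ (1 + (a ^ 2 + S)) ^ β * (1 + (a ^ 2 + S)) ^ α := by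
          apply mul_le_mul
          · exact Real.rpow_le_rpow h2.le (by nlinarith [sq_nonneg a]) hβ0.le
          · exact Real.rpow_le_rpow h1.le (by linarith) hα0.le
          · positivity
          · positivity
      _ = (1 + (a ^ 2 + S)) ^ r := by
          rw [← Real.rpow_add h3]
          congr 1
          rw [hβ_def]; ring
  -- main chain
  calc ∫⁻ x : EuclideanSpace ℝ (Fin (n+1)), ∫⁻ u in Set.Icc (0 : ℝ) T,
        ∫⁻ v in Set.Icc (0 : ℝ) T,
        ENNReal.ofReal ((1 + ‖x‖ ^ 2) ^ (-r) * |u - v| ^ (2 * H - 2) *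
          Real.exp (-((x ⟨0, hd⟩) ^ 2 * |u - v| ^ (2 * H)) / 2))
      = ∫⁻ x : EuclideanSpace ℝ (Fin (n+1)),
          Ψ ((MeasurableEquiv.toLp 2 (Fin (n+1) → ℝ)).symm x) := by
        apply lintegral_congr
        intro x
        have hnorm : ‖x‖ ^ 2 = ∑ i, x i ^ 2 := by
          rw [EuclideanSpace.norm_eq, Real.sq_sqrt (by positivity)]
          simp [sq_abs]
        have hzero : (⟨0, hd⟩ : Fin (n+1)) = 0 := by ext; simp
        rw [hnorm, hzero, hΨ_def]
        rfl
    _ = ∫⁻ y : Fin (n+1) → ℝ, Ψ y :=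
        (EuclideanSpace.volume_preserving_symm_measurableEquiv_toLp (Fin (n+1))).lintegral_comp hΨmeas
    _ = ∫⁻ y : Fin (n+1) → ℝ,
          Ψ' ((MeasurableEquiv.piFinSuccAbove (fun _ : Fin (n+1) => ℝ) 0) y) := by
        apply lintegral_congr
        intro y
        rw [hΨ_def, hΨ'_def]
        simp only [MeasurableEquiv.piFinSuccAbove_apply, Fin.removeNth,
          Fin.succAbove_zero]
        rw [Fin.sum_univ_succ]
        rfl
    _ = ∫⁻ p : ℝ × (Fin n → ℝ), Ψ' p :=
        (volume_preserving_piFinSuccAbove (fun _ : Fin (n+1) => ℝ) 0).lintegral_comp hΨ'meas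
    _ = ∫⁻ a : ℝ, ∫⁻ z : Fin n → ℝ, Ψ' (a, z) := by
        rw [Measure.volume_eq_prod]
        exact lintegral_prod _ hΨ'meas.aemeasurable
    _ ≤ ∫⁻ a : ℝ, ∫⁻ z : Fin n → ℝ, W z *
          (∫⁻ u in Set.Icc (0 : ℝ) T, ∫⁻ v in Set.Icc (0 : ℝ) T,
            ENNReal.ofReal ((1 + a ^ 2) ^ (-α) * |u - v| ^ (2*H - 2) *
              Real.exp (-(a ^ 2 * |u - v| ^ (2*H)) / 2))) := by
        apply lintegral_mono
        intro a
        apply lintegral_mono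
        intro z
        have hS : (0:ℝ) ≤ ∑ j, z j ^ 2 := by positivity
        calc Ψ' (a, z)
            ≤ ∫⁻ u in Set.Icc (0 : ℝ) T, ∫⁻ v in Set.Icc (0 : ℝ) T,
              W z * ENNReal.ofReal ((1 + a ^ 2) ^ (-α) * |u - v| ^ (2*H - 2) *
                Real.exp (-(a ^ 2 * |u - v| ^ (2*H)) / 2)) := by
              rw [hΨ'_def]
              apply lintegral_mono; intro u
              apply lintegral_mono; intro v
              beta_reduce
              rw [hW_def, ← ENNReal.ofReal_mul (Real.rpow_nonneg (by linarith) _)]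
              apply ENNReal.ofReal_le_ofReal
              have hb := split_bound a (∑ j, z j ^ 2) hS
              have hX : (0:ℝ) ≤ |u - v| ^ (2*H - 2) := Real.rpow_nonneg (abs_nonneg _) _
              have hY : (0:ℝ) ≤ Real.exp (-(a ^ 2 * |u - v| ^ (2*H)) / 2) :=
                (Real.exp_pos _).le
              calc (1 + (a ^ 2 + ∑ j, z j ^ 2)) ^ (-r) * |u - v| ^ (2 * H - 2) *
                    Real.exp (-(a ^ 2 * |u - v| ^ (2 * H)) / 2)
                  ≤ ((1 + ∑ j, z j ^ 2) ^ (-β) * (1 + a ^ 2) ^ (-α)) * |u - v| ^ (2 * H - 2) *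
                    Real.exp (-(a ^ 2 * |u - v| ^ (2 * H)) / 2) := by
                    apply mul_le_mul_of_nonneg_right (mul_le_mul_of_nonneg_right hb hX) hY
                _ = (1 + ∑ j, z j ^ 2) ^ (-β) * ((1 + a ^ 2) ^ (-α) * |u - v| ^ (2 * H - 2) *
                    Real.exp (-(a ^ 2 * |u - v| ^ (2 * H)) / 2)) := by ring
          _ = W z * (∫⁻ u in Set.Icc (0 : ℝ) T, ∫⁻ v in Set.Icc (0 : ℝ) T,
              ENNReal.ofReal ((1 + a ^ 2) ^ (-α) * |u - v| ^ (2*H - 2) *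
                Real.exp (-(a ^ 2 * |u - v| ^ (2*H)) / 2))) := by
              rw [← lintegral_const_mul' _ _ (by rw [hW_def]; exact ENNReal.ofReal_ne_top)]
              apply lintegral_congr
              intro u
              rw [← lintegral_const_mul' _ _ (by rw [hW_def]; exact ENNReal.ofReal_ne_top)]
    _ = (∫⁻ z : Fin n → ℝ, W z) * ∫⁻ a : ℝ,
          ∫⁻ u in Set.Icc (0 : ℝ) T, ∫⁻ v in Set.Icc (0 : ℝ) T,
            ENNReal.ofReal ((1 + a ^ 2) ^ (-α) * |u - v| ^ (2*H - 2) *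
              Real.exp (-(a ^ 2 * |u - v| ^ (2*H)) / 2)) := by
        rw [← lintegral_const_mul' _ _ hC.ne]
        apply lintegral_congr
        intro a
        rw [lintegral_mul_const _ hWmeas]
    _ < ⊤ := ENNReal.mul_lt_top hC (lemA hH hH1 hT hα1 hα2)
end
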